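/- arXiv:1605.02655 — 10 statements merged into one kernel-verified Lean document; each statement's English description precedes it below -/
import Mathlib

section
/- Let H be a d-uniform r-partite hypergraph with 2 ≤ d ≤ r that satisfies condition (**) for r, with parts V_i = {x_{1i}, …, x_{ni}} for 1 ≤ i ≤ r. If H is unmixed, then every minimal vertex cover of H contains exactly r − d + 1 elements of each clique {x_{j1}, x_{j2}, …, x_{jr}}, for every 1 ≤ j ≤ n. -/
/-- `C` is a vertex cover of the hypergraph `H`: it meets every hyperedge. -/
def IsVertexCover {V : Type*} [DecidableEq V] (H : Finset (Finset V)) (C : Finset V) : Prop :=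
  ∀ e ∈ H, (e ∩ C).Nonempty

/-- `C` is a minimal vertex cover of `H`. -/
def IsMinimalVertexCover {V : Type*} [DecidableEq V] (H : Finset (Finset V)) (C : Finset V) :
    Prop :=
  IsVertexCover H C ∧ ∀ C' ⊂ C, ¬ IsVertexCover H C'

/-- `H` is unmixed: all minimal vertex covers have the same cardinality. -/
def IsUnmixed {V : Type*} [DecidableEq V] (H : Finset (Finset V)) : Prop :=
  ∀ C₁ C₂ : Finset V, IsMinimalVertexCover H C₁ → IsMinimalVertexCover H C₂ →
    C₁.card = C₂.card

/-- for a `d`-uniform `r`-partite hypergraph (`2 ≤ d ≤ r`) satisfying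
condition (**) for `r` (vertices `x_{ji} = (j, i)`, parts `V_i`, each row a clique),
if `H` is unmixed then every minimal vertex cover contains exactly `r - d + 1`
elements of each clique `{x_{j1}, …, x_{jr}}`. -/
theorem unmixed_minimalVertexCover_inter_row_card {n r d : ℕ} (hd : 2 ≤ d) (hdr : d ≤ r)
    (H : Finset (Finset (Fin n × Fin r)))
    -- every vertex lies in some hyperedge (the union of the hyperedges is the vertex set)
    (hunion : ∀ v : Fin n × Fin r, ∃ e ∈ H, v ∈ e)
    -- `H` is `d`-uniform
    (huniform : ∀ e ∈ H, e.card = d)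
    -- `H` is `r`-partite with parts `V_i = {(j, i) : j}`: no hyperedge contains two
    -- distinct vertices from the same part
    (hpartite : ∀ e ∈ H, ∀ p ∈ e, ∀ p' ∈ e, p.2 = p'.2 → p = p')
    -- condition (**): each row `{(j, 1), …, (j, r)}` is a clique
    (hclique : ∀ j : Fin n, ∀ s ⊆ Finset.univ.image (fun i : Fin r => (j, i)),
      s.card = d → s ∈ H)
    (hunmixed : IsUnmixed H) :
    ∀ C : Finset (Fin n × Fin r), IsMinimalVertexCover H C →
      ∀ j : Fin n, (C ∩ Finset.univ.image (fun i : Fin r => (j, i))).card = r - d + 1 := by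
  classical
  set row : Fin n → Finset (Fin n × Fin r) :=
    fun j => Finset.univ.image (fun i : Fin r => (j, i)) with hrowdef
  have hrowmem : ∀ j (p : Fin n × Fin r), p ∈ row j ↔ p.1 = j := by
    intro j p
    simp only [hrowdef, Finset.mem_image, Finset.mem_univ, true_and]
    constructor
    · rintro ⟨i, rfl⟩; rfl
    · intro h; exact ⟨p.2, by rw [← h]⟩
  have hrowcard : ∀ j, (row j).card = r := by
    intro j
    rw [hrowdef, Finset.card_image_of_injective _ (fun a b h => (Prod.ext_iff.1 h).2)]
    simp
  -- fiberwise sum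
  have hfiber : ∀ C : Finset (Fin n × Fin r), ∑ j : Fin n, (C ∩ row j).card = C.card := by
    intro C
    have : ∀ j, C ∩ row j = C.filter (fun p => p.1 = j) := by
      intro j
      ext p
      simp [Finset.mem_inter, Finset.mem_filter, hrowmem]
    simp_rw [this]
    exact (Finset.card_eq_sum_card_fiberwise (fun p _ => Finset.mem_univ p.1)).symm
  -- lower bound per row for any cover
  have hlower : ∀ C : Finset (Fin n × Fin r), IsVertexCover H C →
      ∀ j, r - d + 1 ≤ (C ∩ row j).card := by
    intro C hC j
    by_contra hcon
    push_neg at hcon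
    have h1 : ((row j) \ C).card + ((row j) ∩ C).card = (row j).card :=
      Finset.card_sdiff_add_card_inter _ _
    rw [Finset.inter_comm, hrowcard j] at h1
    have h2 : d ≤ ((row j) \ C).card := by omega
    obtain ⟨s, hs, hscard⟩ := Finset.exists_subset_card_eq h2
    have hsH : s ∈ H := hclique j s (hs.trans (Finset.sdiff_subset)) hscard
    obtain ⟨p, hp⟩ := hC s hsH
    rw [Finset.mem_inter] at hp
    exact (Finset.mem_sdiff.1 (hs hp.1)).2 hp.2
  -- injectivity of column map on an edge
  have hcolcard : ∀ e ∈ H, (e.image (fun p => (p.2 : ℕ))).card = d := by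
    intro e he
    rw [Finset.card_image_of_injOn, huniform e he]
    intro p hp p' hp' hpp
    exact hpartite e he p hp p' hp' (Fin.val_injective hpp)
  -- C0 is a cover
  set C0 : Finset (Fin n × Fin r) :=
    Finset.univ.filter (fun p : Fin n × Fin r => (p.2 : ℕ) ≤ r - d) with hC0def
  have hC0cover : IsVertexCover H C0 := by
    intro e he
    by_contra hcon
    rw [Finset.not_nonempty_iff_eq_empty, ← Finset.disjoint_iff_inter_eq_empty] at hcon
    have hsub : e.image (fun p => (p.2 : ℕ)) ⊆ Finset.Ico (r - d + 1) r := by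
      intro i hi
      obtain ⟨p, hp, rfl⟩ := Finset.mem_image.1 hi
      have hnot : p ∉ C0 := Finset.disjoint_left.1 hcon hp
      simp only [hC0def, Finset.mem_filter, Finset.mem_univ, true_and, not_le] at hnot
      exact Finset.mem_Ico.2 ⟨hnot, p.2.isLt⟩
    have := Finset.card_le_card hsub
    rw [hcolcard e he, Nat.card_Ico] at this
    omega
  -- each row of C0 has ≤ r - d + 1 elements
  have hC0row : ∀ j, (C0 ∩ row j).card ≤ r - d + 1 := by
    intro j
    have hsub : (C0 ∩ row j).image (fun p => (p.2 : ℕ)) ⊆ Finset.range (r - d + 1) := by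
      intro i hi
      obtain ⟨p, hp, rfl⟩ := Finset.mem_image.1 hi
      have := (Finset.mem_inter.1 hp).1
      simp only [hC0def, Finset.mem_filter, Finset.mem_univ, true_and] at this
      rw [Finset.mem_range]; omega
    have hinj : (C0 ∩ row j).card = ((C0 ∩ row j).image (fun p => (p.2 : ℕ))).card := by
      rw [Finset.card_image_of_injOn]
      intro p hp p' hp' hpp
      have h1 := (hrowmem j p).1 (Finset.mem_inter.1 hp).2
      have h2 := (hrowmem j p').1 (Finset.mem_inter.1 hp').2
      exact Prod.ext (h1.trans h2.symm) (Fin.val_injective hpp)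
    calc (C0 ∩ row j).card = _ := hinj
      _ ≤ (Finset.range (r - d + 1)).card := Finset.card_le_card hsub
      _ = r - d + 1 := Finset.card_range _
  have hC0card : C0.card ≤ n * (r - d + 1) := by
    rw [← hfiber C0]
    calc ∑ j : Fin n, (C0 ∩ row j).card ≤ ∑ _j : Fin n, (r - d + 1) :=
          Finset.sum_le_sum (fun j _ => hC0row j)
      _ = n * (r - d + 1) := by simp [Finset.sum_const, mul_comm]
  -- a minimal cover inside C0
  have hSne : (C0.powerset.filter (fun C' => IsVertexCover H C')).Nonempty :=
    ⟨C0, Finset.mem_filter.2 ⟨Finset.mem_powerset.2 le_rfl, hC0cover⟩⟩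
  obtain ⟨C1, hC1mem, hC1min⟩ :=
    Finset.exists_min_image _ Finset.card hSne
  rw [Finset.mem_filter, Finset.mem_powerset] at hC1mem
  have hC1cover : IsVertexCover H C1 := hC1mem.2
  have hC1minimal : IsMinimalVertexCover H C1 := by
    refine ⟨hC1cover, fun C' hC' hC'cov => ?_⟩
    have hmem : C' ∈ C0.powerset.filter (fun C' => IsVertexCover H C') :=
      Finset.mem_filter.2 ⟨Finset.mem_powerset.2 (hC'.subset.trans hC1mem.1), hC'cov⟩
    have := hC1min C' hmem
    have := Finset.card_lt_card hC'
    omega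
  have hC1card : C1.card = n * (r - d + 1) := by
    have hge : n * (r - d + 1) ≤ C1.card := by
      rw [← hfiber C1]
      calc n * (r - d + 1) = ∑ _j : Fin n, (r - d + 1) := by simp [Finset.sum_const, mul_comm]
        _ ≤ ∑ j : Fin n, (C1 ∩ row j).card :=
            Finset.sum_le_sum (fun j _ => hlower C1 hC1cover j)
    have hle : C1.card ≤ n * (r - d + 1) :=
      le_trans (Finset.card_le_card hC1mem.1) hC0card
    omega
  -- conclusion
  intro C hC j
  show (C ∩ row j).card = r - d + 1
  have hCcard : C.card = n * (r - d + 1) := by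
    rw [hunmixed C C1 hC hC1minimal, hC1card]
  have hsum : ∑ j' : Fin n, (C ∩ row j').card = n * (r - d + 1) := by
    rw [hfiber C, hCcard]
  by_contra hcon
  have hlt : ∑ _j : Fin n, (r - d + 1) < ∑ j' : Fin n, (C ∩ row j').card := by
    refine Finset.sum_lt_sum (fun j' _ => hlower C hC.1 j') ⟨j, Finset.mem_univ j, ?_⟩
    have := hlower C hC.1 j
    omega
  rw [hsum] at hlt
  simp only [Finset.sum_const, Finset.card_univ, Fintype.card_fin, smul_eq_mul] at hlt
  omega
end

section
/- Let H be a d-uniform r-partite hypergraph with 2 ≤ d ≤ r that satisfies condition (**) for r, with parts V_i = {x_{1i}, …, x_{ni}} for 1 ≤ i ≤ r. Then every vertex cover of H contains at least r − d + 1 elements of each clique {x_{j1}, x_{j2}, …, x_{jr}} (1 ≤ j ≤ n), and consequently every vertex cover of H has at least n(r − d + 1) elements. -/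
/-- for a `d`-uniform `r`-partite hypergraph (`2 ≤ d ≤ r`) satisfying
condition (**) for `r` (vertices `x_{ji} = (j, i)`, parts `V_i`, each row a clique),
every vertex cover contains at least `r - d + 1` elements of each clique
`{x_{j1}, …, x_{jr}}`, and consequently has at least `n * (r - d + 1)` elements. -/
theorem vertexCover_card_lower_bound {n r d : ℕ} (hd : 2 ≤ d) (hdr : d ≤ r)
    (H : Finset (Finset (Fin n × Fin r)))
    -- every vertex lies in some hyperedge (the union of the hyperedges is the vertex set)
    (hunion : ∀ v : Fin n × Fin r, ∃ e ∈ H, v ∈ e)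
    -- `H` is `d`-uniform
    (huniform : ∀ e ∈ H, e.card = d)
    -- `H` is `r`-partite with parts `V_i = {(j, i) : j}`: no hyperedge contains two
    -- distinct vertices from the same part
    (hpartite : ∀ e ∈ H, ∀ p ∈ e, ∀ p' ∈ e, p.2 = p'.2 → p = p')
    -- condition (**): each row `{(j, 1), …, (j, r)}` is a clique
    (hclique : ∀ j : Fin n, ∀ s ⊆ Finset.univ.image (fun i : Fin r => (j, i)),
      s.card = d → s ∈ H) :
    ∀ C : Finset (Fin n × Fin r), IsVertexCover H C →
      (∀ j : Fin n, r - d + 1 ≤ (C ∩ Finset.univ.image (fun i : Fin r => (j, i))).card) ∧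
      n * (r - d + 1) ≤ C.card := by
  intro C hC
  set row : Fin n → Finset (Fin n × Fin r) :=
    fun j => Finset.univ.image (fun i : Fin r => (j, i)) with hrow
  have hrowcard : ∀ j, (row j).card = r := by
    intro j
    rw [hrow, Finset.card_image_of_injective _ (fun a b h => by simpa using h)]
    simp
  have hmain : ∀ j : Fin n, r - d + 1 ≤ (C ∩ row j).card := by
    intro j
    have hsd : ((row j) \ C).card ≤ d - 1 := by
      by_contra h
      push_neg at h
      have hdle : d ≤ ((row j) \ C).card := by omega
      obtain ⟨s, hs_sub, hs_card⟩ := Finset.exists_subset_card_eq hdle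
      have hsH : s ∈ H := hclique j s (hs_sub.trans (Finset.sdiff_subset)) hs_card
      obtain ⟨v, hv⟩ := hC s hsH
      rw [Finset.mem_inter] at hv
      have := hs_sub hv.1
      rw [Finset.mem_sdiff] at this
      exact this.2 hv.2
    have hsplit : ((row j) ∩ C).card + ((row j) \ C).card = r := by
      rw [Finset.card_inter_add_card_sdiff, hrowcard]
    rw [Finset.inter_comm]
    omega
  refine ⟨hmain, ?_⟩
  have hdisj : ((Finset.univ : Finset (Fin n)) : Set (Fin n)).PairwiseDisjoint
      (fun j => C ∩ row j) := by
    intro a _ b _ hab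
    simp only [Finset.disjoint_left]
    intro x hx hx'
    apply hab
    simp only [hrow, Finset.mem_inter, Finset.mem_image] at hx hx'
    obtain ⟨_, i, _, hi⟩ := hx
    obtain ⟨_, i', _, hi'⟩ := hx'
    rw [← hi] at hi'
    exact (Prod.mk.injEq _ _ _ _ ▸ hi').1.symm
  calc n * (r - d + 1) = ∑ _j : Fin n, (r - d + 1) := by simp [mul_comm]
    _ ≤ ∑ j : Fin n, (C ∩ row j).card := Finset.sum_le_sum fun j _ => hmain j
    _ = (Finset.univ.disjiUnion (fun j => C ∩ row j) hdisj).card := by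
        rw [Finset.card_disjiUnion]
    _ ≤ C.card := Finset.card_le_card (by
        intro x hx
        rw [Finset.mem_disjiUnion] at hx
        obtain ⟨j, _, hj⟩ := hx
        exact (Finset.mem_inter.mp hj).1)
end

section
/- Let H be a d-uniform r-partite hypergraph with 2 ≤ d ≤ r that satisfies condition (**) for r, with parts V_i = {x_{1i}, …, x_{ni}} for 1 ≤ i ≤ r. Then the set V_1 ∪ V_2 ∪ … ∪ V_{r−d+1} (the union of the first r − d + 1 parts) is a minimal vertex cover of H of cardinality n(r − d + 1). -/
lemma card_filter_val_lt (r m : ℕ) (hm : m ≤ r) :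
    ((Finset.univ : Finset (Fin r)).filter (fun i : Fin r => (i : ℕ) < m)).card = m := by
  have himg : ((Finset.univ : Finset (Fin r)).filter (fun i : Fin r => (i : ℕ) < m)).image Fin.val
      = Finset.range m := by
    ext x
    simp only [Finset.mem_image, Finset.mem_filter, Finset.mem_univ, true_and,
      Finset.mem_range]
    constructor
    · rintro ⟨i, hi, rfl⟩; exact hi
    · intro hx; exact ⟨⟨x, lt_of_lt_of_le hx hm⟩, hx, rfl⟩
  have := Finset.card_image_of_injective
    ((Finset.univ : Finset (Fin r)).filter (fun i : Fin r => (i : ℕ) < m)) Fin.val_injective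
  rw [himg, Finset.card_range] at this
  omega

lemma card_filter_le_val (r m : ℕ) (hm : m ≤ r) :
    ((Finset.univ : Finset (Fin r)).filter (fun i : Fin r => m ≤ (i : ℕ))).card = r - m := by
  have h1 := Finset.card_filter_add_card_filter_not
    (s := (Finset.univ : Finset (Fin r))) (p := fun i : Fin r => (i : ℕ) < m)
  have h2 := card_filter_val_lt r m hm
  simp only [not_lt] at h1
  rw [Finset.card_univ, Fintype.card_fin] at h1
  omega

/-- for a `d`-uniform `r`-partite hypergraph (`2 ≤ d ≤ r`) satisfying
condition (**) for `r` (vertices `x_{ji} = (j, i)`, parts `V_i`, each row a clique),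
the union of the first `r - d + 1` parts `V_1 ∪ … ∪ V_{r-d+1}` is a minimal vertex
cover of cardinality `n * (r - d + 1)`. -/
theorem union_first_parts_isMinimalVertexCover {n r d : ℕ} (hd : 2 ≤ d) (hdr : d ≤ r)
    (H : Finset (Finset (Fin n × Fin r)))
    -- every vertex lies in some hyperedge (the union of the hyperedges is the vertex set)
    (hunion : ∀ v : Fin n × Fin r, ∃ e ∈ H, v ∈ e)
    -- `H` is `d`-uniform
    (huniform : ∀ e ∈ H, e.card = d)
    -- `H` is `r`-partite with parts `V_i = {(j, i) : j}`: no hyperedge contains two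
    -- distinct vertices from the same part
    (hpartite : ∀ e ∈ H, ∀ p ∈ e, ∀ p' ∈ e, p.2 = p'.2 → p = p')
    -- condition (**): each row `{(j, 1), …, (j, r)}` is a clique
    (hclique : ∀ j : Fin n, ∀ s ⊆ Finset.univ.image (fun i : Fin r => (j, i)),
      s.card = d → s ∈ H) :
    IsMinimalVertexCover H
      (Finset.univ.filter (fun p : Fin n × Fin r => p.2.val < r - d + 1)) ∧
    (Finset.univ.filter (fun p : Fin n × Fin r => p.2.val < r - d + 1)).card =
      n * (r - d + 1) := by
  set m := r - d + 1 with hmdef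
  have hm : m ≤ r := by omega
  set C := Finset.univ.filter (fun p : Fin n × Fin r => p.2.val < m) with hC
  refine ⟨⟨?_, ?_⟩, ?_⟩
  · -- vertex cover
    intro e he
    by_contra hemp
    rw [Finset.not_nonempty_iff_eq_empty] at hemp
    have hall : ∀ p ∈ e, m ≤ (p.2 : ℕ) := by
      intro p hp
      by_contra hlt
      have : p ∈ e ∩ C := by
        simp only [Finset.mem_inter, hC, Finset.mem_filter, Finset.mem_univ, true_and]
        exact ⟨hp, by omega⟩
      rw [hemp] at this
      exact absurd this (Finset.notMem_empty p)
    have hinj : Set.InjOn Prod.snd (e : Set (Fin n × Fin r)) := by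
      intro p hp p' hp' hpp
      exact hpartite e he p hp p' hp' hpp
    have hcardim : (e.image Prod.snd).card = d := by
      rw [Finset.card_image_of_injOn hinj, huniform e he]
    have hsub : e.image Prod.snd ⊆
        (Finset.univ : Finset (Fin r)).filter (fun i : Fin r => m ≤ (i : ℕ)) := by
      intro i hi
      simp only [Finset.mem_image] at hi
      obtain ⟨p, hp, rfl⟩ := hi
      simp only [Finset.mem_filter, Finset.mem_univ, true_and]
      exact hall p hp
    have := Finset.card_le_card hsub
    rw [hcardim, card_filter_le_val r m hm] at this
    omega
  · -- minimality
    intro C' hC' hcov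
    obtain ⟨v, hvC, hvC'⟩ := Finset.exists_of_ssubset hC'
    obtain ⟨j, i⟩ := v
    have hvi : (i : ℕ) < m := by
      rw [hC] at hvC
      simpa using hvC
    set T := ((Finset.univ : Finset (Fin r)).filter (fun k : Fin r => m ≤ (k : ℕ))).image
      (fun k : Fin r => (j, k)) with hT
    set e := insert (j, i) T with he
    have hnotT : (j, i) ∉ T := by
      simp only [hT, Finset.mem_image, Finset.mem_filter, Finset.mem_univ, true_and]
      rintro ⟨k, hk, hjk⟩
      have : k = i := (Prod.mk.injEq _ _ _ _).mp hjk |>.2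
      omega
    have hcardT : T.card = d - 1 := by
      rw [hT, Finset.card_image_of_injective _ (fun a b hab => by
        exact (Prod.mk.injEq _ _ _ _).mp hab |>.2), card_filter_le_val r m hm]
      omega
    have hecard : e.card = d := by
      rw [he, Finset.card_insert_of_notMem hnotT, hcardT]
      omega
    have hesub : e ⊆ Finset.univ.image (fun k : Fin r => (j, k)) := by
      intro p hp
      rw [he, Finset.mem_insert] at hp
      rcases hp with rfl | hp
      · exact Finset.mem_image.mpr ⟨i, Finset.mem_univ _, rfl⟩
      · rw [hT] at hp
        simp only [Finset.mem_image, Finset.mem_filter, Finset.mem_univ, true_and] at hp ⊢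
        obtain ⟨k, _, rfl⟩ := hp
        exact ⟨k, rfl⟩
    have heH : e ∈ H := hclique j e hesub hecard
    obtain ⟨q, hq⟩ := hcov e heH
    rw [Finset.mem_inter] at hq
    obtain ⟨hqe, hqC'⟩ := hq
    have hqC : q ∈ C := hC'.subset hqC'
    have hqlt : (q.2 : ℕ) < m := by
      rw [hC] at hqC; simpa using hqC
    rw [he, Finset.mem_insert] at hqe
    rcases hqe with rfl | hqe
    · exact hvC' hqC'
    · rw [hT] at hqe
      simp only [Finset.mem_image, Finset.mem_filter, Finset.mem_univ, true_and] at hqe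
      obtain ⟨k, hk, rfl⟩ := hqe
      simp at hqlt
      omega
  · -- cardinality
    have hsplit : C = (Finset.univ : Finset (Fin n)) ×ˢ
        ((Finset.univ : Finset (Fin r)).filter (fun i : Fin r => (i : ℕ) < m)) := by
      ext p
      simp [hC, Finset.mem_product]
    rw [hC] at hsplit ⊢
    rw [hsplit, Finset.card_product, Finset.card_univ, Fintype.card_fin,
      card_filter_val_lt r m hm]
end

section
/- Let H be a d-uniform r-partite hypergraph with 2 ≤ d ≤ r that satisfies condition (**) for r, with parts V_i = {x_{1i}, …, x_{ni}} for 1 ≤ i ≤ r. Then H is unmixed if and only if the following holds: for every 1 ≤ q ≤ n, if 𝔢_1, 𝔢_2, …, 𝔢_{r−d+2} are submaximal edges of H and i_1, i_2, …, i_{r−d+2} are distinct indices in {1, …, r} with 𝔢_1 ∼ x_{q i_1}, 𝔢_2 ∼ x_{q i_2}, …, 𝔢_{r−d+2} ∼ x_{q i_{r−d+2}}, then the set 𝔢_1 ∪ 𝔢_2 ∪ … ∪ 𝔢_{r−d+2} is not independent. -/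
/-- `M` is an independent set of `H`: it contains no hyperedge. -/
def IsIndependent {V : Type*} (H : Finset (Finset V)) (M : Finset V) : Prop :=
  ∀ e ∈ H, ¬ e ⊆ M

/-- `𝔢` is a submaximal edge of the `d`-uniform hypergraph `H`: a `(d-1)`-element
subset of some hyperedge. -/
def IsSubmaximalEdge {V : Type*} (H : Finset (Finset V)) (d : ℕ) (𝔢 : Finset V) : Prop :=
  (∃ e ∈ H, 𝔢 ⊆ e) ∧ 𝔢.card = d - 1

set_option linter.unusedSectionVars false
set_option linter.unusedVariables false

open Finset

section Aux
variable {V : Type*} [DecidableEq V] [Fintype V]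

/-- maximal independent set (formulated with witnesses). -/
def MaxIndep (H : Finset (Finset V)) (M : Finset V) : Prop :=
  IsIndependent H M ∧ ∀ v ∉ M, ∃ e ∈ H, v ∈ e ∧ e ⊆ insert v M

lemma indep_subset {H : Finset (Finset V)} {M N : Finset V}
    (h : IsIndependent H M) (hNM : N ⊆ M) : IsIndependent H N :=
  fun e he hsub => h e he (hsub.trans hNM)

lemma maxIndep_compl {H : Finset (Finset V)} {M : Finset V} (hM : MaxIndep H M) :
    IsMinimalVertexCover H Mᶜ := by
  constructor
  · intro e he
    obtain ⟨x, hxe, hxM⟩ := Finset.not_subset.mp (hM.1 e he)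
    exact ⟨x, Finset.mem_inter.mpr ⟨hxe, Finset.mem_compl.mpr hxM⟩⟩
  · intro C' hC' hcov
    obtain ⟨v, hvM, hvC'⟩ := Finset.exists_of_ssubset hC'
    obtain ⟨e, he, hve, hes⟩ := hM.2 v (Finset.mem_compl.mp hvM)
    obtain ⟨x, hx⟩ := hcov e he
    rw [Finset.mem_inter] at hx
    have hxM : x ∉ M := Finset.mem_compl.mp (hC'.1 hx.2)
    have hxv : x = v := by
      rcases Finset.mem_insert.mp (hes hx.1) with h | h
      · exact h
      · exact absurd h hxM
    exact hvC' (hxv ▸ hx.2)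

lemma compl_maxIndep {H : Finset (Finset V)} {C : Finset V}
    (hC : IsMinimalVertexCover H C) : MaxIndep H Cᶜ := by
  constructor
  · intro e he hsub
    obtain ⟨x, hx⟩ := hC.1 e he
    rw [Finset.mem_inter] at hx
    exact Finset.mem_compl.mp (hsub hx.1) hx.2
  · intro v hv
    have hvC : v ∈ C := by simpa using hv
    have hss : C.erase v ⊂ C := Finset.erase_ssubset hvC
    have hnc := hC.2 _ hss
    rw [IsVertexCover] at hnc
    push_neg at hnc
    obtain ⟨e, he, hne⟩ := hnc
    have hne : e ∩ C.erase v = ∅ := hne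
    have hdisj : ∀ x ∈ e, x ∉ C.erase v := by
      intro x hx hx'
      exact Finset.notMem_empty x (hne ▸ Finset.mem_inter.mpr ⟨hx, hx'⟩)
    obtain ⟨x, hx⟩ := hC.1 e he
    rw [Finset.mem_inter] at hx
    have hxv : x = v := by
      by_contra hne'
      exact hdisj x hx.1 (Finset.mem_erase.mpr ⟨hne', hx.2⟩)
    refine ⟨e, he, hxv ▸ hx.1, ?_⟩
    intro y hy
    rcases eq_or_ne y v with rfl | hyv
    · exact Finset.mem_insert_self _ _
    · have : y ∉ C := fun hyC => hdisj y hy (Finset.mem_erase.mpr ⟨hyv, hyC⟩)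
      exact Finset.mem_insert_of_mem (Finset.mem_compl.mpr this)

lemma exists_maxIndep (H : Finset (Finset V)) {U : Finset V} (hU : IsIndependent H U) :
    ∃ M, U ⊆ M ∧ MaxIndep H M := by
  classical
  let s : Finset (Finset V) :=
    Finset.univ.filter (fun S => U ⊆ S ∧ IsIndependent H S)
  have hUs : U ∈ s := by simp [s, hU]
  obtain ⟨M, hMs, hmax⟩ := Finset.exists_max_image s Finset.card ⟨U, hUs⟩
  simp only [s, Finset.mem_filter, Finset.mem_univ, true_and] at hMs
  refine ⟨M, hMs.1, hMs.2, ?_⟩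
  intro v hv
  by_contra hcon
  push_neg at hcon
  have hind : IsIndependent H (insert v M) := by
    intro e he hsub
    by_cases hve : v ∈ e
    · exact hcon e he hve hsub
    · exact hMs.2 e he (fun x hx => by
        rcases Finset.mem_insert.mp (hsub hx) with rfl | h
        · exact absurd hx hve
        · exact h)
  have hmem : insert v M ∈ s := by
    simp only [s, Finset.mem_filter, Finset.mem_univ, true_and]
    exact ⟨hMs.1.trans (Finset.subset_insert _ _), hind⟩
  have := hmax _ hmem
  rw [Finset.card_insert_of_notMem hv] at this
  omega

end Aux

/-- main theorem: a `d`-uniform `r`-partite hypergraph (`2 ≤ d ≤ r`)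
satisfying condition (**) for `r` (vertices `x_{ji} = (j, i)`, parts `V_i`, each row a
clique) is unmixed iff for every row `q` and every family of `r - d + 2` submaximal
edges `𝔢_t ∼ x_{q i_t}` with distinct indices `i_t`, the union `⋃ 𝔢_t` is not
independent. -/
theorem unmixed_iff_submaximal_condition {n r d : ℕ} (hd : 2 ≤ d) (hdr : d ≤ r)
    (H : Finset (Finset (Fin n × Fin r)))
    -- every vertex lies in some hyperedge (the union of the hyperedges is the vertex set)
    (hunion : ∀ v : Fin n × Fin r, ∃ e ∈ H, v ∈ e)
    -- `H` is `d`-uniform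
    (huniform : ∀ e ∈ H, e.card = d)
    -- `H` is `r`-partite with parts `V_i = {(j, i) : j}`: no hyperedge contains two
    -- distinct vertices from the same part
    (hpartite : ∀ e ∈ H, ∀ p ∈ e, ∀ p' ∈ e, p.2 = p'.2 → p = p')
    -- condition (**): each row `{(j, 1), …, (j, r)}` is a clique
    (hclique : ∀ j : Fin n, ∀ s ⊆ Finset.univ.image (fun i : Fin r => (j, i)),
      s.card = d → s ∈ H) :
    IsUnmixed H ↔
      ∀ q : Fin n, ∀ ι : Fin (r - d + 2) → Fin r, Function.Injective ι →
        ∀ 𝔢 : Fin (r - d + 2) → Finset (Fin n × Fin r),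
          (∀ t, IsSubmaximalEdge H d (𝔢 t)) →
          (∀ t, insert (q, ι t) (𝔢 t) ∈ H) →
          ¬ IsIndependent H (Finset.univ.biUnion 𝔢) := by
  classical
  have hd1r : d - 1 ≤ r := by omega
  set colset : Finset (Fin r) := (Finset.univ : Finset (Fin (d-1))).image (Fin.castLE hd1r)
    with hcolset
  have hmemcol : ∀ i : Fin r, i ∈ colset ↔ (i : ℕ) < d - 1 := by
    intro i
    constructor
    · intro hi
      obtain ⟨c, -, rfl⟩ := Finset.mem_image.mp hi
      exact c.2
    · intro hi
      exact Finset.mem_image.mpr ⟨⟨i.1, hi⟩, Finset.mem_univ _, by ext; simp⟩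
  have hcardcol : colset.card = d - 1 := by
    rw [hcolset, Finset.card_image_of_injective _ (Fin.castLE_injective hd1r)]
    simp
  set A : Finset (Fin n × Fin r) → Fin n → Finset (Fin r) :=
    fun M j => Finset.univ.filter (fun i => (j, i) ∈ M) with hA
  have hcardrow : ∀ M : Finset (Fin n × Fin r), ∀ j,
      (M.filter (fun p => p.1 = j)).card = (A M j).card := by
    intro M j
    have hrow : M.filter (fun p => p.1 = j) = (A M j).image (fun i => (j, i)) := by
      ext ⟨a, b⟩
      simp only [Finset.mem_filter, Finset.mem_image, hA, Finset.mem_univ, true_and,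
        Prod.mk.injEq]
      constructor
      · rintro ⟨hm, rfl⟩; exact ⟨b, hm, rfl, rfl⟩
      · rintro ⟨i, hi, rfl, rfl⟩; exact ⟨hi, rfl⟩
    rw [hrow, Finset.card_image_of_injective _ (fun a b hab => by simpa using hab)]
  have hsumM : ∀ M : Finset (Fin n × Fin r), M.card = ∑ j, (A M j).card := by
    intro M
    rw [Finset.card_eq_sum_card_fiberwise (f := Prod.fst) (t := Finset.univ)
      (fun x _ => Finset.mem_univ _)]
    exact Finset.sum_congr rfl fun j _ => hcardrow M j
  have hrowle : ∀ M : Finset (Fin n × Fin r), IsIndependent H M → ∀ j,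
      (A M j).card ≤ d - 1 := by
    intro M hM j
    by_contra hcon
    have hge : d ≤ (A M j).card := by omega
    obtain ⟨t, hts, htc⟩ := Finset.exists_subset_card_eq hge
    have hsH : t.image (fun i => (j, i)) ∈ H := by
      apply hclique j
      · intro p hp
        obtain ⟨i, _, rfl⟩ := Finset.mem_image.mp hp
        exact Finset.mem_image.mpr ⟨i, Finset.mem_univ _, rfl⟩
      · rw [Finset.card_image_of_injective _ (fun a b hab => by simpa using hab)]
        exact htc
    refine hM _ hsH ?_
    intro p hp
    obtain ⟨i, hi, rfl⟩ := Finset.mem_image.mp hp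
    have h2 := hts hi
    simp only [hA, Finset.mem_filter] at h2
    exact h2.2
  set M0 : Finset (Fin n × Fin r) := Finset.univ ×ˢ colset with hM0
  have hM0mem : ∀ p : Fin n × Fin r, p ∈ M0 ↔ p.2 ∈ colset := by
    intro p; simp [hM0, Finset.mem_product]
  have hAM0 : ∀ j, A M0 j = colset := by
    intro j; ext i; simp [hA, hM0mem]
  have hM0ind : IsIndependent H M0 := by
    intro e he hsub
    have hinj : Set.InjOn Prod.snd e := fun p hp p' hp' h => hpartite e he p hp p' hp' h
    have h1 : (e.image Prod.snd).card = d := by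
      rw [Finset.card_image_of_injOn hinj, huniform e he]
    have h2 : e.image Prod.snd ⊆ colset := by
      intro i hi
      obtain ⟨p, hp, rfl⟩ := Finset.mem_image.mp hi
      exact (hM0mem p).mp (hsub hp)
    have := Finset.card_le_card h2
    omega
  have hM0max : MaxIndep H M0 := by
    refine ⟨hM0ind, ?_⟩
    rintro ⟨j, i⟩ hv
    have hi : i ∉ colset := fun h => hv ((hM0mem _).mpr h)
    have hnotmem : (j, i) ∉ colset.image fun c => (j, c) := by
      intro h
      obtain ⟨c, hc, hcc⟩ := Finset.mem_image.mp h
      have hci : c = i := by simpa using hcc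
      exact hi (hci ▸ hc)
    have hscard : (insert (j, i) (colset.image fun c => (j, c))).card = d := by
      rw [Finset.card_insert_of_notMem hnotmem,
        Finset.card_image_of_injective _ (fun a b hab => by simpa using hab), hcardcol]
      omega
    have hsH : insert (j, i) (colset.image fun c => (j, c)) ∈ H := by
      apply hclique j _ _ hscard
      intro p hp
      rcases Finset.mem_insert.mp hp with rfl | hp'
      · exact Finset.mem_image.mpr ⟨i, Finset.mem_univ _, rfl⟩
      · obtain ⟨c, _, rfl⟩ := Finset.mem_image.mp hp'
        exact Finset.mem_image.mpr ⟨c, Finset.mem_univ _, rfl⟩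
    refine ⟨_, hsH, Finset.mem_insert_self _ _, ?_⟩
    intro p hp
    rcases Finset.mem_insert.mp hp with rfl | hp'
    · exact Finset.mem_insert_self _ _
    · obtain ⟨c, hc, rfl⟩ := Finset.mem_image.mp hp'
      exact Finset.mem_insert_of_mem ((hM0mem _).mpr hc)
  constructor
  · intro hum q ι hinj 𝔢 hsm hins hindU
    obtain ⟨M, hUM, hM⟩ := exists_maxIndep H hindU
    have hnotin : ∀ t, (q, ι t) ∉ M := by
      intro t hmem
      refine hM.1 _ (hins t) ?_
      intro p hp
      rcases Finset.mem_insert.mp hp with rfl | hp'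
      · exact hmem
      · exact hUM (Finset.mem_biUnion.mpr ⟨t, Finset.mem_univ _, hp'⟩)
    have hrowq : (A M q).card ≤ d - 2 := by
      have hsub : A M q ⊆ (Finset.univ.image ι)ᶜ := by
        intro i hi
        simp only [hA, Finset.mem_filter] at hi
        rw [Finset.mem_compl]
        intro h
        obtain ⟨t, -, rfl⟩ := Finset.mem_image.mp h
        exact hnotin t hi.2
      have h1 := Finset.card_le_card hsub
      rw [Finset.card_compl, Finset.card_image_of_injective _ hinj] at h1
      simp only [Finset.card_univ, Fintype.card_fin] at h1
      omega
    have hlt : M.card < M0.card := by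
      rw [hsumM M, hsumM M0]
      apply Finset.sum_lt_sum
      · intro j _
        rw [hAM0 j, hcardcol]
        exact hrowle M hM.1 j
      · exact ⟨q, Finset.mem_univ _, by rw [hAM0 q, hcardcol]; omega⟩
    have hc1 := maxIndep_compl hM
    have hc2 := maxIndep_compl hM0max
    have heq := hum _ _ hc1 hc2
    rw [Finset.card_compl, Finset.card_compl] at heq
    have h1 : M.card ≤ Fintype.card (Fin n × Fin r) := Finset.card_le_univ M
    have h2 : M0.card ≤ Fintype.card (Fin n × Fin r) := Finset.card_le_univ M0
    omega
  · intro hcond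
    have key : ∀ M : Finset (Fin n × Fin r), MaxIndep H M → ∀ j, (A M j).card = d - 1 := by
      intro M hM q
      have hle := hrowle M hM.1 q
      by_contra hne
      have hq : (A M q).card ≤ d - 2 := by omega
      have hcompl : r - d + 2 ≤ ((A M q)ᶜ).card := by
        rw [Finset.card_compl]
        simp only [Fintype.card_fin]
        omega
      obtain ⟨s, hss, hsc⟩ := Finset.exists_subset_card_eq hcompl
      set ι : Fin (r - d + 2) → Fin r := fun t => ((s.orderIsoOfFin hsc) t : Fin r) with hι
      have hιinj : Function.Injective ι := by
        intro a b hab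
        exact (s.orderIsoOfFin hsc).injective (Subtype.ext hab)
      have hιmem : ∀ t, (q, ι t) ∉ M := by
        intro t
        have h3 : ι t ∈ (A M q)ᶜ := hss ((s.orderIsoOfFin hsc) t).2
        rw [Finset.mem_compl] at h3
        simp only [hA, Finset.mem_filter, Finset.mem_univ, true_and] at h3
        exact h3
      have hex : ∀ t, ∃ e ∈ H, (q, ι t) ∈ e ∧ e ⊆ insert (q, ι t) M :=
        fun t => hM.2 _ (hιmem t)
      choose e he hve hes using hex
      have hsm : ∀ t, IsSubmaximalEdge H d ((e t).erase (q, ι t)) := by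
        intro t
        refine ⟨⟨e t, he t, Finset.erase_subset _ _⟩, ?_⟩
        rw [Finset.card_erase_of_mem (hve t), huniform _ (he t)]
      have hins' : ∀ t, insert (q, ι t) ((e t).erase (q, ι t)) ∈ H := by
        intro t
        rw [Finset.insert_erase (hve t)]
        exact he t
      refine hcond q ι hιinj (fun t => (e t).erase (q, ι t)) hsm hins' ?_
      apply indep_subset hM.1
      apply Finset.biUnion_subset.mpr
      intro t _ p hp
      have h1 := Finset.mem_erase.mp hp
      rcases Finset.mem_insert.mp (hes t h1.2) with h | h
      · exact absurd h h1.1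
      · exact h
    intro C1 C2 hC1 hC2
    have h1 := compl_maxIndep hC1
    have h2 := compl_maxIndep hC2
    have hcc : (C1ᶜ).card = (C2ᶜ).card := by
      rw [hsumM _, hsumM _]
      exact Finset.sum_congr rfl fun j _ => by rw [key _ h1 j, key _ h2 j]
    have k1 : C1.card = Fintype.card (Fin n × Fin r) - (C1ᶜ).card := by
      conv_lhs => rw [← compl_compl C1]
      exact Finset.card_compl _
    have k2 : C2.card = Fintype.card (Fin n × Fin r) - (C2ᶜ).card := by
      conv_lhs => rw [← compl_compl C2]
      exact Finset.card_compl _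
    rw [k1, k2, hcc]
end

section
/- Let G be a finite simple bipartite graph without isolated vertices. Then G is unmixed if and only if there is a bipartition V_1 = {x_1, …, x_g}, V_2 = {y_1, …, y_g} of G such that: (a) {x_i, y_i} is an edge of G for all i, and (b) whenever {x_i, y_j} and {x_j, y_k} are edges of G and i, j, k are distinct, {x_i, y_k} is also an edge of G. -/
/-- `C` is a vertex cover of the graph `G`: every edge has an endpoint in `C`. -/
def Graph.IsVertexCover {V : Type*} (G : SimpleGraph V) (C : Finset V) : Prop :=
  ∀ u v : V, G.Adj u v → u ∈ C ∨ v ∈ C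

/-- `C` is a minimal vertex cover of the graph `G`. -/
def Graph.IsMinimalVertexCover {V : Type*} (G : SimpleGraph V) (C : Finset V) : Prop :=
  Graph.IsVertexCover G C ∧ ∀ C' ⊂ C, ¬ Graph.IsVertexCover G C'

/-- `G` is unmixed: all minimal vertex covers have the same cardinality. -/
def Graph.IsUnmixed {V : Type*} (G : SimpleGraph V) : Prop :=
  ∀ C₁ C₂ : Finset V, Graph.IsMinimalVertexCover G C₁ → Graph.IsMinimalVertexCover G C₂ →
    C₁.card = C₂.card

lemma exists_minimal_subcover {V : Type*} [Fintype V] [DecidableEq V] (G : SimpleGraph V) :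
    ∀ C : Finset V, Graph.IsVertexCover G C →
      ∃ C', C' ⊆ C ∧ Graph.IsMinimalVertexCover G C' := by
  intro C
  induction C using Finset.strongInduction with
  | _ C ih =>
    intro hC
    by_cases h : ∀ C' ⊂ C, ¬ Graph.IsVertexCover G C'
    · exact ⟨C, Finset.Subset.refl C, hC, h⟩
    · push_neg at h
      obtain ⟨C', hsub, hC'⟩ := h
      obtain ⟨C'', h1, h2⟩ := ih C' hsub hC'
      exact ⟨C'', h1.trans hsub.subset, h2⟩

lemma choice_inj {V : Type*} {g : ℕ} {x y : Fin g → V}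
    (hx : Function.Injective x) (hy : Function.Injective y) (hxy : ∀ i j, x i ≠ y j)
    (c : Fin g → V) (hc : ∀ t, c t = x t ∨ c t = y t) : Function.Injective c := by
  intro s t h
  rcases hc s with hs | hs <;> rcases hc t with ht | ht <;> rw [hs, ht] at h
  · exact hx h
  · exact absurd h (hxy s t)
  · exact absurd h.symm (hxy t s)
  · exact hy h

/-- The structural conditions imply that every minimal vertex cover has cardinality `g`. -/
lemma min_cover_card {V : Type*} [Fintype V] [DecidableEq V] (G : SimpleGraph V)
    {g : ℕ} {x y : Fin g → V}
    (hxinj : Function.Injective x) (hyinj : Function.Injective y)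
    (hxy : ∀ i j : Fin g, x i ≠ y j)
    (hpart : ∀ v : V, (∃ i, v = x i) ∨ (∃ j, v = y j))
    (hadj : ∀ u v : V, G.Adj u v →
      ((∃ i, u = x i) ∧ (∃ j, v = y j)) ∨ ((∃ j, u = y j) ∧ (∃ i, v = x i)))
    (hmatch : ∀ i : Fin g, G.Adj (x i) (y i))
    (hb : ∀ i j k : Fin g, i ≠ j → j ≠ k → i ≠ k →
      G.Adj (x i) (y j) → G.Adj (x j) (y k) → G.Adj (x i) (y k))
    (C : Finset V) (hC : Graph.IsMinimalVertexCover G C) : C.card = g := by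
  classical
  obtain ⟨hCov, hMin⟩ := hC
  have h1 : ∀ t, x t ∈ C ∨ y t ∈ C := fun t => hCov _ _ (hmatch t)
  -- no pair is doubly covered
  have h2 : ∀ t, ¬(x t ∈ C ∧ y t ∈ C) := by
    rintro t ⟨hxC, hyC⟩
    -- erase x t : some edge at x t is uncovered, giving y b ∉ C adjacent to x t
    obtain ⟨b, hab, hbC⟩ : ∃ b, G.Adj (x t) (y b) ∧ y b ∉ C := by
      have hne := hMin (C.erase (x t)) (Finset.erase_ssubset hxC)
      simp only [Graph.IsVertexCover] at hne
      push_neg at hne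
      obtain ⟨u, v, huv, hu, hv⟩ := hne
      rcases eq_or_ne u (x t) with rfl | hu'
      · -- v is the uncovered neighbor
        have hvC : v ∉ C := fun h => hv (Finset.mem_erase.mpr ⟨fun h' => (G.ne_of_adj huv) h'.symm, h⟩)
        rcases hadj _ _ huv with ⟨_, j, rfl⟩ | ⟨⟨j, hj⟩, _⟩
        · exact ⟨j, huv, hvC⟩
        · exact absurd hj (hxy t j)
      · rcases eq_or_ne v (x t) with rfl | hv'
        · have huC : u ∉ C := fun h => hu (Finset.mem_erase.mpr ⟨hu', h⟩)
          rcases hadj _ _ huv.symm with ⟨_, j, rfl⟩ | ⟨⟨j, hj⟩, _⟩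
          · exact ⟨j, huv.symm, huC⟩
          · exact absurd hj (hxy t j)
        · have huC : u ∉ C := fun h => hu (Finset.mem_erase.mpr ⟨hu', h⟩)
          have hvC : v ∉ C := fun h => hv (Finset.mem_erase.mpr ⟨hv', h⟩)
          rcases hCov u v huv with h | h
          · exact absurd h huC
          · exact absurd h hvC
    -- erase y t : some edge at y t is uncovered, giving x a ∉ C adjacent to y t
    obtain ⟨a, haa, haC⟩ : ∃ a, G.Adj (x a) (y t) ∧ x a ∉ C := by
      have hne := hMin (C.erase (y t)) (Finset.erase_ssubset hyC)
      simp only [Graph.IsVertexCover] at hne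
      push_neg at hne
      obtain ⟨u, v, huv, hu, hv⟩ := hne
      rcases eq_or_ne u (y t) with rfl | hu'
      · have hvC : v ∉ C := fun h => hv (Finset.mem_erase.mpr ⟨fun h' => (G.ne_of_adj huv) h'.symm, h⟩)
        rcases hadj _ _ huv.symm with ⟨⟨i, rfl⟩, _⟩ | ⟨_, i, hi⟩
        · exact ⟨i, huv.symm, hvC⟩
        · exact absurd hi.symm (hxy i t)
      · rcases eq_or_ne v (y t) with rfl | hv'
        · have huC : u ∉ C := fun h => hu (Finset.mem_erase.mpr ⟨hu', h⟩)
          rcases hadj _ _ huv with ⟨⟨i, rfl⟩, _⟩ | ⟨_, i, hi⟩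
          · exact ⟨i, huv, huC⟩
          · exact absurd hi.symm (hxy i t)
        · have huC : u ∉ C := fun h => hu (Finset.mem_erase.mpr ⟨hu', h⟩)
          have hvC : v ∉ C := fun h => hv (Finset.mem_erase.mpr ⟨hv', h⟩)
          rcases hCov u v huv with h | h
          · exact absurd h huC
          · exact absurd h hvC
    have hbt : b ≠ t := fun h => hbC (h ▸ hyC)
    have hat : a ≠ t := fun h => haC (h ▸ hxC)
    rcases eq_or_ne a b with rfl | hab'
    · rcases h1 a with h | h
      · exact haC h
      · exact hbC h
    · have := hb a t b hat (Ne.symm hbt) hab' haa hab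
      rcases hCov _ _ this with h | h
      · exact haC h
      · exact hbC h
  -- C is exactly the image of the selector
  set c : Fin g → V := fun t => if x t ∈ C then x t else y t with hc_def
  have hc : ∀ t, c t = x t ∨ c t = y t := by
    intro t
    by_cases h : x t ∈ C <;> simp [hc_def, h]
  have hcmem : ∀ t, c t ∈ C := by
    intro t
    by_cases h : x t ∈ C
    · simpa [hc_def, h] using h
    · have := (h1 t).resolve_left h
      simpa [hc_def, h] using this
  have hCeq : C = Finset.univ.image c := by
    ext v
    simp only [Finset.mem_image, Finset.mem_univ, true_and]
    constructor
    · intro hv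
      rcases hpart v with ⟨i, rfl⟩ | ⟨j, rfl⟩
      · exact ⟨i, by simp [hc_def, hv]⟩
      · refine ⟨j, ?_⟩
        have hxj : x j ∉ C := fun h => h2 j ⟨h, hv⟩
        simp [hc_def, hxj]
    · rintro ⟨t, rfl⟩
      exact hcmem t
  rw [hCeq, Finset.card_image_of_injective _ (choice_inj hxinj hyinj hxy c hc)]
  simp


/-- Villarreal: a finite simple bipartite graph `G` without isolated
vertices is unmixed iff there is a bipartition `V₁ = {x_1, …, x_g}`,
`V₂ = {y_1, …, y_g}` of `G` such that (a) `{x_i, y_i}` is an edge for all `i`, and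
(b) if `{x_i, y_j}` and `{x_j, y_k}` are edges and `i, j, k` are distinct, then
`{x_i, y_k}` is an edge. -/
theorem bipartite_unmixed_iff {V : Type*} [Fintype V] [DecidableEq V] (G : SimpleGraph V)
    -- `G` is bipartite: there is a bipartition of the vertex set
    (hbip : ∃ V₁ V₂ : Finset V, Disjoint V₁ V₂ ∧ V₁ ∪ V₂ = Finset.univ ∧
      ∀ u v : V, G.Adj u v → (u ∈ V₁ ∧ v ∈ V₂) ∨ (u ∈ V₂ ∧ v ∈ V₁))
    -- `G` has no isolated vertices
    (hiso : ∀ v : V, ∃ u : V, G.Adj v u) :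
    Graph.IsUnmixed G ↔
      ∃ (g : ℕ) (x y : Fin g → V),
        Function.Injective x ∧ Function.Injective y ∧
        (∀ i j : Fin g, x i ≠ y j) ∧
        (∀ v : V, (∃ i, v = x i) ∨ (∃ j, v = y j)) ∧
        (∀ u v : V, G.Adj u v →
          ((∃ i, u = x i) ∧ (∃ j, v = y j)) ∨ ((∃ j, u = y j) ∧ (∃ i, v = x i))) ∧
        (∀ i : Fin g, G.Adj (x i) (y i)) ∧
        (∀ i j k : Fin g, i ≠ j → j ≠ k → i ≠ k →
          G.Adj (x i) (y j) → G.Adj (x j) (y k) → G.Adj (x i) (y k)) := by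

  constructor
  · intro hU
    classical
    obtain ⟨V₁, V₂, hdisj, huniv, hbe⟩ := hbip
    -- V₁ and V₂ are minimal vertex covers
    have hV₁cov : Graph.IsVertexCover G V₁ := fun u v h =>
      (hbe u v h).elim (fun h => Or.inl h.1) (fun h => Or.inr h.2)
    have hV₂cov : Graph.IsVertexCover G V₂ := fun u v h =>
      (hbe u v h).elim (fun h => Or.inr h.2) (fun h => Or.inl h.1)
    have hV₁min : Graph.IsMinimalVertexCover G V₁ := by
      refine ⟨hV₁cov, ?_⟩
      intro C' hC' hcov
      obtain ⟨v, hv1, hv2⟩ := Finset.exists_of_ssubset hC'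
      obtain ⟨u, hadj⟩ := hiso v
      rcases hbe v u hadj with ⟨hvV1, huV2⟩ | ⟨hvV2, _⟩
      · rcases hcov v u hadj with h | h
        · exact hv2 h
        · exact (Finset.disjoint_left.mp hdisj (hC'.subset h)) huV2
      · exact (Finset.disjoint_left.mp hdisj hv1) hvV2
    have hV₂min : Graph.IsMinimalVertexCover G V₂ := by
      refine ⟨hV₂cov, ?_⟩
      intro C' hC' hcov
      obtain ⟨v, hv1, hv2⟩ := Finset.exists_of_ssubset hC'
      obtain ⟨u, hadj⟩ := hiso v
      rcases hbe v u hadj with ⟨hvV1, _⟩ | ⟨hvV2, huV1⟩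
      · exact (Finset.disjoint_right.mp hdisj hv1) hvV1
      · rcases hcov v u hadj with h | h
        · exact hv2 h
        · exact (Finset.disjoint_right.mp hdisj (hC'.subset h)) huV1
    -- every minimal cover has cardinality |V₁|
    have hming : ∀ C : Finset V, Graph.IsMinimalVertexCover G C → C.card = V₁.card :=
      fun C h => hU C V₁ h hV₁min
    have hcard12 : V₂.card = V₁.card := hming V₂ hV₂min
    -- Hall's condition for the neighbourhoods of vertices of V₁
    set t : ↥V₁ → Finset V := fun v => Finset.univ.filter (fun u => G.Adj (v : V) u) with ht_def
    have hall : ∀ S : Finset ↥V₁, S.card ≤ (S.biUnion t).card := by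
      intro S
      by_contra hlt
      push_neg at hlt
      set Sv : Finset V := S.image Subtype.val with hSv_def
      have hSvcard : Sv.card = S.card := Finset.card_image_of_injective _ Subtype.val_injective
      have hSv1 : Sv ⊆ V₁ := by
        intro w hw
        obtain ⟨a, _, rfl⟩ := Finset.mem_image.mp hw
        exact a.2
      set C₀ : Finset V := (V₁ \ Sv) ∪ S.biUnion t with hC₀_def
      have hC₀cov : Graph.IsVertexCover G C₀ := by
        intro u v h
        rcases hbe u v h with ⟨hu1, hv2⟩ | ⟨hu2, hv1⟩
        · by_cases hu : u ∈ Sv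
          · obtain ⟨w, hw, hwval⟩ := Finset.mem_image.mp hu
            right
            refine Finset.mem_union_right _ (Finset.mem_biUnion.mpr ⟨w, hw, ?_⟩)
            simp [ht_def, hwval, h]
          · exact Or.inl (Finset.mem_union_left _ (Finset.mem_sdiff.mpr ⟨hu1, hu⟩))
        · by_cases hv : v ∈ Sv
          · obtain ⟨w, hw, hwval⟩ := Finset.mem_image.mp hv
            left
            refine Finset.mem_union_right _ (Finset.mem_biUnion.mpr ⟨w, hw, ?_⟩)
            simp [ht_def, hwval, h.symm]
          · exact Or.inr (Finset.mem_union_left _ (Finset.mem_sdiff.mpr ⟨hv1, hv⟩))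
      obtain ⟨C, hCsub, hCmin⟩ := exists_minimal_subcover G C₀ hC₀cov
      have h1 : C.card = V₁.card := hming C hCmin
      have h2 : C.card ≤ C₀.card := Finset.card_le_card hCsub
      have h3 : C₀.card ≤ (V₁ \ Sv).card + (S.biUnion t).card := Finset.card_union_le _ _
      have h4 : (V₁ \ Sv).card = V₁.card - S.card := by
        rw [Finset.card_sdiff_of_subset hSv1, hSvcard]
      have h5 : S.card ≤ V₁.card := hSvcard ▸ Finset.card_le_card hSv1
      omega
    obtain ⟨f, hfinj, hf⟩ := (Finset.all_card_le_biUnion_card_iff_exists_injective t).mp hall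
    have hfadj : ∀ v : ↥V₁, G.Adj (v : V) (f v) := by
      intro v
      have := hf v
      simp [ht_def] at this
      exact this
    set e := V₁.equivFin with he_def
    refine ⟨V₁.card, fun i => ((e.symm i : ↥V₁) : V), fun i => f (e.symm i), ?_, ?_, ?_, ?_, ?_, ?_, ?_⟩
    case _ => exact Subtype.val_injective.comp (e.symm.injective)
    case _ => exact hfinj.comp (e.symm.injective)
    all_goals {
      set x : Fin V₁.card → V := fun i => ((e.symm i : ↥V₁) : V) with hx_def
      set y : Fin V₁.card → V := fun i => f (e.symm i) with hy_def
      have hxmem : ∀ i, x i ∈ V₁ := fun i => (e.symm i).2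
      have hxinj : Function.Injective x := fun a b hab => e.symm.injective (Subtype.val_injective hab)
      have hyinj : Function.Injective y := fun a b hab => e.symm.injective (hfinj hab)
      have hmatch : ∀ i, G.Adj (x i) (y i) := fun i => hfadj (e.symm i)
      have hymem : ∀ i, y i ∈ V₂ := by
        intro i
        rcases hbe _ _ (hmatch i) with ⟨_, h⟩ | ⟨h, _⟩
        · exact h
        · exact absurd h (Finset.disjoint_left.mp hdisj (hxmem i))
      have hxy : ∀ i j, x i ≠ y j := by
        intro i j h
        exact (Finset.disjoint_left.mp hdisj (h ▸ hxmem i)) (hymem j)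
      have hxsurj : ∀ v ∈ V₁, ∃ i, v = x i := by
        intro v hv
        exact ⟨e ⟨v, hv⟩, by simp [hx_def]⟩
      have hysurj : ∀ v ∈ V₂, ∃ j, v = y j := by
        have himg : Finset.univ.image y = V₂ := by
          have hsub : Finset.univ.image y ⊆ V₂ := by
            intro w hw
            obtain ⟨j, _, rfl⟩ := Finset.mem_image.mp hw
            exact hymem j
          refine Finset.eq_of_subset_of_card_le hsub ?_
          rw [Finset.card_image_of_injective _ hyinj,
            Finset.card_univ, Fintype.card_fin, hcard12]
        intro v hv
        obtain ⟨j, _, hj⟩ := Finset.mem_image.mp (himg ▸ hv)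
        exact ⟨j, hj.symm⟩
      first
      | -- hxy
        exact hxy
      | -- partition
        (intro v
         rcases Finset.mem_union.mp (huniv ▸ Finset.mem_univ v) with hv | hv
         · exact Or.inl (hxsurj v hv)
         · exact Or.inr (hysurj v hv))
      | -- adjacency respects bipartition
        (intro u v h
         rcases hbe u v h with ⟨hu, hv⟩ | ⟨hu, hv⟩
         · exact Or.inl ⟨hxsurj u hu, hysurj v hv⟩
         · exact Or.inr ⟨hysurj u hu, hxsurj v hv⟩)
      | -- matching
        exact hmatch
      | -- condition (b)
        (intro i j k hij hjk hik h1 h2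
         by_contra hnot
         have hC₀cov : Graph.IsVertexCover G (Finset.univ \ {x i, y k}) := by
           intro u v h
           by_contra hcon
           push_neg at hcon
           obtain ⟨hu, hv⟩ := hcon
           have hu' : u = x i ∨ u = y k := by
             have := fun h' => hu (Finset.mem_sdiff.mpr ⟨Finset.mem_univ u, h'⟩)
             by_contra hc
             push_neg at hc
             exact this (by simp [hc.1, hc.2])
           have hv' : v = x i ∨ v = y k := by
             have := fun h' => hv (Finset.mem_sdiff.mpr ⟨Finset.mem_univ v, h'⟩)
             by_contra hc
             push_neg at hc
             exact this (by simp [hc.1, hc.2])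
           have hne := G.ne_of_adj h
           rcases hu' with rfl | rfl <;> rcases hv' with rfl | rfl
           · exact hne rfl
           · exact hnot h
           · exact hnot h.symm
           · exact hne rfl
         obtain ⟨C, hCsub, hCcov, hCmin⟩ := exists_minimal_subcover G _ hC₀cov
         have hcardC : C.card = V₁.card := hming C ⟨hCcov, hCmin⟩
         have hxiC : x i ∉ C := by
           intro h
           have := Finset.mem_sdiff.mp (hCsub h)
           simp at this
         have hykC : y k ∉ C := by
           intro h
           have := Finset.mem_sdiff.mp (hCsub h)
           simp at this
         have hyjC : y j ∈ C := (hCcov _ _ h1).resolve_left hxiC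
         have hxjC : x j ∈ C := (hCcov _ _ h2).resolve_right hykC
         set c : Fin V₁.card → V := fun s => if x s ∈ C then x s else y s with hc_def
         have hc : ∀ s, c s = x s ∨ c s = y s := by
           intro s
           by_cases h : x s ∈ C <;> simp [hc_def, h]
         have hcmem : ∀ s, c s ∈ C := by
           intro s
           by_cases h : x s ∈ C
           · simpa [hc_def, h] using h
           · have := (hCcov _ _ (hmatch s)).resolve_left h
             simpa [hc_def, h] using this
         have hcinj : Function.Injective c := choice_inj hxinj hyinj hxy c hc
         have hyj_not : y j ∉ Finset.univ.image c := by
           intro hmem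
           obtain ⟨s, _, hs⟩ := Finset.mem_image.mp hmem
           rcases hc s with h | h
           · rw [h] at hs
             exact hxy s j hs
           · rw [h] at hs
             have hsj : s = j := hyinj hs
             subst hsj
             rw [hc_def] at h
             simp only [hxjC, if_pos] at h
             exact hxy s s h
         have hsub : insert (y j) (Finset.univ.image c) ⊆ C := by
           intro w hw
           rcases Finset.mem_insert.mp hw with rfl | hw'
           · exact hyjC
           · obtain ⟨s, _, rfl⟩ := Finset.mem_image.mp hw'
             exact hcmem s
         have hcount : (insert (y j) (Finset.univ.image c)).card = V₁.card + 1 := by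
           rw [Finset.card_insert_of_notMem hyj_not,
             Finset.card_image_of_injective _ hcinj, Finset.card_univ, Fintype.card_fin]
         have := Finset.card_le_card hsub
         omega)
    }
  · rintro ⟨g, x, y, hxinj, hyinj, hxy, hpart, hadj, hmatch, hb⟩
    intro C₁ C₂ h₁ h₂
    rw [min_cover_card G hxinj hyinj hxy hpart hadj hmatch hb C₁ h₁,
        min_cover_card G hxinj hyinj hxy hpart hadj hmatch hb C₂ h₂]
end

section
/- Let G be a finite simple graph that satisfies condition (*) for r ≥ 2, with parts V_i = {x_{1i}, …, x_{ni}} for 1 ≤ i ≤ r. Then G is unmixed if and only if the following holds: for every 1 ≤ q ≤ n, if there are vertices x_{k_1 s_1}, …, x_{k_r s_r} with x_{k_1 s_1} adjacent to x_{q1}, x_{k_2 s_2} adjacent to x_{q2}, …, x_{k_r s_r} adjacent to x_{qr}, then the set {x_{k_1 s_1}, …, x_{k_r s_r}} is not independent in G. -/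
section Aux

variable {V : Type*} [Fintype V] [DecidableEq V] (G : SimpleGraph V)

/-- `M` is an independent set (as a Finset). -/
def IndepF (M : Finset V) : Prop := ∀ u ∈ M, ∀ v ∈ M, ¬ G.Adj u v

lemma cover_iff_compl_indep (C : Finset V) :
    Graph.IsVertexCover G C ↔ IndepF G Cᶜ := by
  constructor
  · intro h u hu v hv hadj
    rcases h u v hadj with h1 | h1
    · exact (Finset.mem_compl.1 hu) h1
    · exact (Finset.mem_compl.1 hv) h1
  · intro h u v hadj
    by_contra hc
    push_neg at hc
    exact h u (Finset.mem_compl.2 hc.1) v (Finset.mem_compl.2 hc.2) hadj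

lemma minimal_iff_compl_maximal (C : Finset V) :
    Graph.IsMinimalVertexCover G C ↔
      (IndepF G Cᶜ ∧ ∀ M, Cᶜ ⊂ M → ¬ IndepF G M) := by
  constructor
  · rintro ⟨hcov, hmin⟩
    refine ⟨(cover_iff_compl_indep G C).1 hcov, ?_⟩
    intro M hM hind
    have hsub : Mᶜ ⊂ C := by
      have := Finset.compl_ssubset_compl.2 hM
      simpa using this
    exact hmin Mᶜ hsub ((cover_iff_compl_indep G Mᶜ).2 (by simpa using hind))
  · rintro ⟨hind, hmax⟩
    refine ⟨(cover_iff_compl_indep G C).2 hind, ?_⟩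
    intro C' hC' hcov
    have hM : Cᶜ ⊂ C'ᶜ := Finset.compl_ssubset_compl.2 hC'
    exact hmax C'ᶜ hM ((cover_iff_compl_indep G C').1 hcov)

lemma exists_maximal_indep (M : Finset V) (hM : IndepF G M) :
    ∃ N, M ⊆ N ∧ IndepF G N ∧ ∀ N', N ⊂ N' → ¬ IndepF G N' := by
  classical
  let S : Finset (Finset V) :=
    (Finset.univ : Finset (Finset V)).filter (fun N => IndepF G N ∧ M ⊆ N)
  have hMS : M ∈ S := by simp [S, hM]
  obtain ⟨N, hNS, hmax⟩ := S.exists_max_image (fun N => N.card) ⟨M, hMS⟩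
  simp only [S, Finset.mem_filter, Finset.mem_univ, true_and] at hNS
  refine ⟨N, hNS.2, hNS.1, ?_⟩
  intro N' hss hind
  have hN'S : N' ∈ S := by
    simp only [S, Finset.mem_filter, Finset.mem_univ, true_and]
    exact ⟨hind, hNS.2.trans hss.subset⟩
  have := hmax N' hN'S
  have := Finset.card_lt_card hss
  omega

end Aux

/-- a finite simple graph satisfying condition (*) for `r ≥ 2`
(vertices `x_{ji} = (j, i)`, `r` parts, no edge within a part, each row a clique)
is unmixed iff for every `q`, whenever there are vertices `y_1, …, y_r` with `y_i`
adjacent to `x_{q i}` for each `i`, the set `{y_1, …, y_r}` is not independent. -/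
theorem rPartite_graph_unmixed_iff {n r : ℕ} (hr : 2 ≤ r)
    (G : SimpleGraph (Fin n × Fin r))
    -- condition (*): no edge joins two vertices in the same part
    (hpartite : ∀ p q : Fin n × Fin r, G.Adj p q → p.2 ≠ q.2)
    -- condition (*): each row `{(j, 1), …, (j, r)}` is a clique
    (hclique : ∀ j : Fin n, ∀ i i' : Fin r, i ≠ i' → G.Adj (j, i) (j, i')) :
    Graph.IsUnmixed G ↔
      ∀ q : Fin n, ∀ y : Fin r → Fin n × Fin r,
        (∀ i : Fin r, G.Adj (y i) (q, i)) →
        ∃ i j : Fin r, G.Adj (y i) (y j) := by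
  classical
  -- first coordinate is injective on any independent set
  have hinj : ∀ M : Finset (Fin n × Fin r), IndepF G M →
      Set.InjOn Prod.fst (M : Set (Fin n × Fin r)) := by
    intro M hM a ha b hb hab
    by_contra hne
    have h2 : a.2 ≠ b.2 := by
      intro h
      exact hne (Prod.ext hab h)
    have h := hclique a.1 a.2 b.2 h2
    simp only [Prod.mk.eta] at h
    rw [hab, Prod.mk.eta] at h
    exact hM a ha b hb h
  -- card bound from injectivity
  have hcard_le : ∀ M : Finset (Fin n × Fin r), IndepF G M → M.card ≤ n := by
    intro M hM
    have := Finset.card_image_of_injOn (f := Prod.fst) (hinj M hM)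
    calc M.card = (M.image Prod.fst).card := this.symm
      _ ≤ (Finset.univ : Finset (Fin n)).card := Finset.card_le_univ _
      _ = n := by simp
  -- the column {(j, 0) : j} is a maximal independent set of size n
  have hn0 : 0 < r := by omega
  set i0 : Fin r := ⟨0, hn0⟩ with hi0
  set Col : Finset (Fin n × Fin r) := Finset.univ.image (fun j => (j, i0)) with hCol
  have hColInd : IndepF G Col := by
    intro u hu v hv hadj
    simp only [hCol, Finset.mem_image, Finset.mem_univ, true_and] at hu hv
    obtain ⟨j, rfl⟩ := hu
    obtain ⟨k, rfl⟩ := hv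
    exact hpartite _ _ hadj rfl
  have hColMax : ∀ N', Col ⊂ N' → ¬ IndepF G N' := by
    intro N' hss hind
    obtain ⟨a, haN, haC⟩ := Finset.exists_of_ssubset hss
    have ha2 : a.2 ≠ i0 := by
      intro h
      apply haC
      simp only [hCol, Finset.mem_image, Finset.mem_univ, true_and]
      exact ⟨a.1, by simp [← h]⟩
    have hmem : (a.1, i0) ∈ N' := hss.subset (by
      simp [hCol])
    have : G.Adj (a.1, a.2) (a.1, i0) := hclique a.1 a.2 i0 ha2
    exact hind a haN (a.1, i0) hmem (by simpa using this)
  have hColCard : Col.card = n := by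
    rw [hCol, Finset.card_image_of_injective _ (fun a b h => congrArg Prod.fst h)]
    simp
  have hcardV : Fintype.card (Fin n × Fin r) = n * r := by simp
  constructor
  · -- unmixed → condition
    intro hu q y hadj
    by_contra hno
    push_neg at hno
    -- the image of y is independent
    set M0 : Finset (Fin n × Fin r) := Finset.univ.image y with hM0
    have hM0ind : IndepF G M0 := by
      intro u hu' v hv' hA
      simp only [hM0, Finset.mem_image, Finset.mem_univ, true_and] at hu' hv'
      obtain ⟨i, rfl⟩ := hu'
      obtain ⟨j, rfl⟩ := hv'
      exact hno i j hA
    obtain ⟨N, hsub, hNind, hNmax⟩ := exists_maximal_indep G M0 hM0ind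
    -- N avoids row q
    have hrow : ∀ a ∈ N, a.1 ≠ q := by
      intro a haN h
      have hy : y a.2 ∈ N := hsub (by simp [hM0])
      have : G.Adj (y a.2) (q, a.2) := hadj a.2
      rw [← h] at this
      exact hNind (y a.2) hy a haN (by simpa using this)
    -- hence N has card ≤ n - 1
    have hNlt : N.card < n := by
      have himg : N.image Prod.fst ⊆ Finset.univ.erase q := by
        intro x hx
        simp only [Finset.mem_image] at hx
        obtain ⟨a, haN, rfl⟩ := hx
        exact Finset.mem_erase.2 ⟨hrow a haN, Finset.mem_univ _⟩
      have h1 := Finset.card_image_of_injOn (f := Prod.fst) (hinj N hNind)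
      have h2 := Finset.card_le_card himg
      have h3 : (Finset.univ.erase q : Finset (Fin n)).card = n - 1 := by
        rw [Finset.card_erase_of_mem (Finset.mem_univ _)]
        simp
      have hq : 0 < n := q.pos
      omega
    -- two minimal covers of different size
    have hC1 : Graph.IsMinimalVertexCover G Nᶜ := by
      rw [minimal_iff_compl_maximal]
      rw [compl_compl]
      exact ⟨hNind, hNmax⟩
    have hC2 : Graph.IsMinimalVertexCover G Colᶜ := by
      rw [minimal_iff_compl_maximal]
      rw [compl_compl]
      exact ⟨hColInd, hColMax⟩
    have heq := hu Nᶜ Colᶜ hC1 hC2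
    rw [Finset.card_compl, Finset.card_compl, hcardV, hColCard] at heq
    have hle1 : N.card ≤ n * r := le_trans (Finset.card_le_univ _) (by simp)
    have hle2 : n ≤ n * r := Nat.le_mul_of_pos_right n hn0
    omega
  · -- condition → unmixed
    intro cond
    -- every maximal independent set has card n
    have key : ∀ N : Finset (Fin n × Fin r), IndepF G N →
        (∀ N', N ⊂ N' → ¬ IndepF G N') → N.card = n := by
      intro N hNind hNmax
      have hsurj : ∀ q : Fin n, ∃ a ∈ N, a.1 = q := by
        intro q
        by_contra hq
        push_neg at hq
        have hnotmem : ∀ i : Fin r, (q, i) ∉ N := by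
          intro i hmem
          exact hq (q, i) hmem rfl
        have hyex : ∀ i : Fin r, ∃ z ∈ N, G.Adj z (q, i) := by
          intro i
          have hss : N ⊂ insert (q, i) N := Finset.ssubset_insert (hnotmem i)
          have := hNmax _ hss
          unfold IndepF at this
          push_neg at this
          obtain ⟨u, hu, v, hv, hA⟩ := this
          rcases Finset.mem_insert.1 hu with rfl | hu'
          · rcases Finset.mem_insert.1 hv with rfl | hv'
            · exact absurd hA (G.loopless.irrefl _)
            · exact ⟨v, hv', hA.symm⟩
          · rcases Finset.mem_insert.1 hv with rfl | hv'
            · exact ⟨u, hu', hA⟩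
            · exact absurd hA (hNind u hu' v hv')
        choose y hyN hyA using hyex
        obtain ⟨i, j, hA⟩ := cond q y hyA
        exact hNind (y i) (hyN i) (y j) (hyN j) hA
      have himg : N.image Prod.fst = Finset.univ := by
        apply Finset.eq_univ_of_forall
        intro q
        obtain ⟨a, haN, ha⟩ := hsurj q
        exact Finset.mem_image.2 ⟨a, haN, ha⟩
      have h1 := Finset.card_image_of_injOn (f := Prod.fst) (hinj N hNind)
      rw [himg] at h1
      simpa using h1.symm
    intro C1 C2 h1 h2
    rw [minimal_iff_compl_maximal] at h1 h2
    have k1 := key _ h1.1 h1.2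
    have k2 := key _ h2.1 h2.2
    rw [Finset.card_compl, hcardV] at k1 k2
    have e1 : C1.card ≤ n * r := by simpa [hcardV] using Finset.card_le_univ C1
    have e2 : C2.card ≤ n * r := by simpa [hcardV] using Finset.card_le_univ C2
    omega
end

section
/- Let H be a d-uniform hypergraph (d ≥ 2) on the vertex set {x_{ji} : 1 ≤ j ≤ n, 1 ≤ i ≤ d} (with these nd vertices distinct) such that {{x_{j1}, x_{j2}, …, x_{jd}} : 1 ≤ j ≤ n} is a perfect matching of H. If H is unmixed and H has a minimal vertex cover of cardinality n, then for every 1 ≤ q ≤ n, whenever 𝔢_1 and 𝔢_2 are submaximal edges of H with 𝔢_1 ∼ x_{q i_1} and 𝔢_2 ∼ x_{q i_2} for distinct indices i_1, i_2 in {1, …, d}, the set 𝔢_1 ∪ 𝔢_2 is not independent. -/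
/-- let `H` be a `d`-uniform hypergraph (`d ≥ 2`) on the vertex set
`{x_{ji} = (j, i)}` such that the rows `{x_{j1}, …, x_{jd}}` form a perfect matching.
If `H` is unmixed and has a minimal vertex cover of cardinality `n`, then for every
`q`, whenever `𝔢₁ ∼ x_{q i₁}` and `𝔢₂ ∼ x_{q i₂}` for submaximal edges `𝔢₁, 𝔢₂`
and distinct `i₁, i₂`, the set `𝔢₁ ∪ 𝔢₂` is not independent. -/
theorem unmixed_necessary_condition_matching {n d : ℕ} (hd : 2 ≤ d)
    (H : Finset (Finset (Fin n × Fin d)))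
    -- every vertex lies in some hyperedge (the union of the hyperedges is the vertex set)
    (hunion : ∀ v : Fin n × Fin d, ∃ e ∈ H, v ∈ e)
    -- `H` is `d`-uniform
    (huniform : ∀ e ∈ H, e.card = d)
    -- the rows `{(j, 1), …, (j, d)}` are hyperedges (they form a perfect matching)
    (hmatching : ∀ j : Fin n, Finset.univ.image (fun i : Fin d => (j, i)) ∈ H)
    (hunmixed : IsUnmixed H)
    (hmincover : ∃ C : Finset (Fin n × Fin d), IsMinimalVertexCover H C ∧ C.card = n) :
    ∀ q : Fin n, ∀ i₁ i₂ : Fin d, i₁ ≠ i₂ →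
      ∀ 𝔢₁ 𝔢₂ : Finset (Fin n × Fin d),
        IsSubmaximalEdge H d 𝔢₁ → IsSubmaximalEdge H d 𝔢₂ →
        insert (q, i₁) 𝔢₁ ∈ H → insert (q, i₂) 𝔢₂ ∈ H →
        ¬ IsIndependent H (𝔢₁ ∪ 𝔢₂) := by
  obtain ⟨C₀, hC₀min, hC₀card⟩ := hmincover
  intro q i₁ i₂ hne 𝔢₁ 𝔢₂ hs₁ hs₂ he₁ he₂ hindep
  classical
  set M : Finset (Fin n × Fin d) := 𝔢₁ ∪ 𝔢₂ with hM
  set S := Finset.univ.filter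
    (fun N : Finset (Fin n × Fin d) => M ⊆ N ∧ IsIndependent H N) with hS
  have hMS : M ∈ S := Finset.mem_filter.2 ⟨Finset.mem_univ _, Finset.Subset.refl _, hindep⟩
  obtain ⟨N, hNS, hNmax⟩ := S.exists_max_image Finset.card ⟨M, hMS⟩
  rw [hS, Finset.mem_filter] at hNS
  obtain ⟨-, hMN, hNind⟩ := hNS
  have hmaxi : ∀ v ∉ N, ¬ IsIndependent H (insert v N) := by
    intro v hv hind
    have h1 : insert v N ∈ S := Finset.mem_filter.2
      ⟨Finset.mem_univ _, hMN.trans (Finset.subset_insert _ _), hind⟩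
    have := hNmax _ h1
    rw [Finset.card_insert_of_notMem hv] at this
    omega
  set C : Finset (Fin n × Fin d) := Finset.univ \ N with hC
  have hcover : IsVertexCover H C := by
    intro e he
    by_contra h
    rw [Finset.not_nonempty_iff_eq_empty] at h
    refine hNind e he (fun x hx => ?_)
    by_contra hxN
    have hxc : x ∈ e ∩ C :=
      Finset.mem_inter.2 ⟨hx, Finset.mem_sdiff.2 ⟨Finset.mem_univ _, hxN⟩⟩
    simp [h] at hxc
  have hCmin : IsMinimalVertexCover H C := by
    refine ⟨hcover, ?_⟩
    intro C' hC' hcov'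
    obtain ⟨v, hvC, hvC'⟩ := Finset.exists_of_ssubset hC'
    have hvN : v ∉ N := (Finset.mem_sdiff.1 hvC).2
    have hni := hmaxi v hvN
    rw [IsIndependent] at hni
    push_neg at hni
    obtain ⟨e, he, hesub⟩ := hni
    obtain ⟨x, hx⟩ := hcov' e he
    rw [Finset.mem_inter] at hx
    have hxv : x = v := by
      rcases Finset.mem_insert.1 (hesub hx.1) with h | h
      · exact h
      · exact absurd h ((Finset.mem_sdiff.1 (hC'.1 hx.2)).2)
    exact hvC' (hxv ▸ hx.2)
  have hCn : C.card = n := (hunmixed C C₀ hCmin hC₀min).trans hC₀card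
  have hfib : ∀ j : Fin n, 1 ≤ (C.filter (fun v => v.1 = j)).card := by
    intro j
    obtain ⟨x, hx⟩ := hcover _ (hmatching j)
    rw [Finset.mem_inter] at hx
    obtain ⟨i, -, hi⟩ := Finset.mem_image.1 hx.1
    exact Finset.card_pos.2 ⟨x, Finset.mem_filter.2 ⟨hx.2, by rw [← hi]⟩⟩
  have hsum : ∑ j : Fin n, (C.filter (fun v => v.1 = j)).card = n := by
    rw [← Finset.card_eq_sum_card_fiberwise (fun x _ => Finset.mem_univ x.1), hCn]
  have hn : 0 < n := lt_of_le_of_lt (Nat.zero_le _) q.isLt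
  have hq1 : (C.filter (fun v => v.1 = q)).card = 1 := by
    by_contra h
    have h2 : 2 ≤ (C.filter (fun v => v.1 = q)).card := by
      have := hfib q; omega
    have h3 : (Finset.univ.erase q).card • 1 ≤
        ∑ j ∈ Finset.univ.erase q, (C.filter (fun v => v.1 = j)).card :=
      Finset.card_nsmul_le_sum _ _ 1 (fun j _ => hfib j)
    rw [smul_eq_mul, mul_one, Finset.card_erase_of_mem (Finset.mem_univ q),
      Finset.card_univ, Fintype.card_fin] at h3
    have h4 : (∑ j ∈ Finset.univ.erase q, (C.filter (fun v => v.1 = j)).card) +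
        (C.filter (fun v => v.1 = q)).card = n := by
      rw [Finset.sum_erase_add _ _ (Finset.mem_univ q)]; exact hsum
    omega
  obtain ⟨w, hw⟩ := Finset.card_eq_one.1 hq1
  have key : (q, i₁) ∉ C ∨ (q, i₂) ∉ C := by
    by_contra h
    push_neg at h
    have h1 : (q, i₁) ∈ C.filter (fun v => v.1 = q) := Finset.mem_filter.2 ⟨h.1, rfl⟩
    have h2 : (q, i₂) ∈ C.filter (fun v => v.1 = q) := Finset.mem_filter.2 ⟨h.2, rfl⟩
    rw [hw, Finset.mem_singleton] at h1 h2
    exact hne (by simpa using h1.trans h2.symm)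
  rcases key with h | h
  · have hmem : (q, i₁) ∈ N := by
      by_contra h'
      exact h (Finset.mem_sdiff.2 ⟨Finset.mem_univ _, h'⟩)
    exact hNind _ he₁
      (Finset.insert_subset hmem (Finset.subset_union_left.trans hMN))
  · have hmem : (q, i₂) ∈ N := by
      by_contra h'
      exact h (Finset.mem_sdiff.2 ⟨Finset.mem_univ _, h'⟩)
    exact hNind _ he₂
      (Finset.insert_subset hmem (Finset.subset_union_right.trans hMN))
end

section
/- Let H be a d-uniform hypergraph (d ≥ 2) on the vertex set {x_{ji} : 1 ≤ j ≤ n, 1 ≤ i ≤ d} (with these nd vertices distinct) such that {{x_{j1}, x_{j2}, …, x_{jd}} : 1 ≤ j ≤ n} is a perfect matching of H. Suppose that for every 1 ≤ q ≤ n, whenever 𝔢_1 and 𝔢_2 are submaximal edges of H with 𝔢_1 ∼ x_{q i_1} and 𝔢_2 ∼ x_{q i_2} for distinct indices i_1, i_2 in {1, …, d}, the set 𝔢_1 ∪ 𝔢_2 is not independent. Then H is unmixed. -/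
/-- let `H` be a `d`-uniform hypergraph (`d ≥ 2`) on the vertex set
`{x_{ji} = (j, i)}` such that the rows `{x_{j1}, …, x_{jd}}` form a perfect matching.
If for every `q`, whenever `𝔢₁ ∼ x_{q i₁}` and `𝔢₂ ∼ x_{q i₂}` for submaximal edges
`𝔢₁, 𝔢₂` and distinct `i₁, i₂`, the set `𝔢₁ ∪ 𝔢₂` is not independent, then `H`
is unmixed. -/
theorem sufficient_condition_unmixed_matching {n d : ℕ} (hd : 2 ≤ d)
    (H : Finset (Finset (Fin n × Fin d)))
    -- every vertex lies in some hyperedge (the union of the hyperedges is the vertex set)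
    (hunion : ∀ v : Fin n × Fin d, ∃ e ∈ H, v ∈ e)
    -- `H` is `d`-uniform
    (huniform : ∀ e ∈ H, e.card = d)
    -- the rows `{(j, 1), …, (j, d)}` are hyperedges (they form a perfect matching)
    (hmatching : ∀ j : Fin n, Finset.univ.image (fun i : Fin d => (j, i)) ∈ H)
    (hcond : ∀ q : Fin n, ∀ i₁ i₂ : Fin d, i₁ ≠ i₂ →
      ∀ 𝔢₁ 𝔢₂ : Finset (Fin n × Fin d),
        IsSubmaximalEdge H d 𝔢₁ → IsSubmaximalEdge H d 𝔢₂ →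
        insert (q, i₁) 𝔢₁ ∈ H → insert (q, i₂) 𝔢₂ ∈ H →
        ¬ IsIndependent H (𝔢₁ ∪ 𝔢₂)) :
    IsUnmixed H := by
  have key : ∀ C : Finset (Fin n × Fin d), IsMinimalVertexCover H C → C.card = n := by
    rintro C ⟨hC, hmin⟩
    -- every vertex of C has a private edge
    have priv : ∀ v ∈ C, ∃ e ∈ H, e ∩ C = {v} := by
      intro v hv
      have hsub : C.erase v ⊂ C := Finset.erase_ssubset hv
      have hnot := hmin _ hsub
      simp only [IsVertexCover, not_forall] at hnot
      obtain ⟨e, he, hne⟩ := hnot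
      refine ⟨e, he, ?_⟩
      have hempty : e ∩ C.erase v = ∅ := Finset.not_nonempty_iff_eq_empty.mp hne
      have huniq : ∀ w ∈ e ∩ C, w = v := by
        intro w hw
        by_contra hwv
        have : w ∈ e ∩ C.erase v := by
          rw [Finset.mem_inter] at hw ⊢
          exact ⟨hw.1, Finset.mem_erase.mpr ⟨hwv, hw.2⟩⟩
        rw [hempty] at this
        exact absurd this (Finset.notMem_empty w)
      obtain ⟨w, hw⟩ := hC e he
      have hwv := huniq w hw
      subst hwv
      exact Finset.eq_singleton_iff_unique_mem.mpr ⟨hw, huniq⟩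
    -- at most one vertex of C per row
    have onerow : ∀ (q : Fin n) (i₁ i₂ : Fin d), (q, i₁) ∈ C → (q, i₂) ∈ C → i₁ = i₂ := by
      intro q i₁ i₂ h1 h2
      by_contra hne
      obtain ⟨e₁, he₁, hc₁⟩ := priv _ h1
      obtain ⟨e₂, he₂, hc₂⟩ := priv _ h2
      have hm1 : (q, i₁) ∈ e₁ := by
        have : (q, i₁) ∈ e₁ ∩ C := by rw [hc₁]; exact Finset.mem_singleton_self _
        exact (Finset.mem_inter.mp this).1
      have hm2 : (q, i₂) ∈ e₂ := by
        have : (q, i₂) ∈ e₂ ∩ C := by rw [hc₂]; exact Finset.mem_singleton_self _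
        exact (Finset.mem_inter.mp this).1
      have hins1 : insert (q, i₁) (e₁.erase (q, i₁)) ∈ H := by
        rw [Finset.insert_erase hm1]; exact he₁
      have hins2 : insert (q, i₂) (e₂.erase (q, i₂)) ∈ H := by
        rw [Finset.insert_erase hm2]; exact he₂
      have sub1 : IsSubmaximalEdge H d (e₁.erase (q, i₁)) :=
        ⟨⟨e₁, he₁, Finset.erase_subset _ _⟩, by
          rw [Finset.card_erase_of_mem hm1, huniform e₁ he₁]⟩
      have sub2 : IsSubmaximalEdge H d (e₂.erase (q, i₂)) :=
        ⟨⟨e₂, he₂, Finset.erase_subset _ _⟩, by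
          rw [Finset.card_erase_of_mem hm2, huniform e₂ he₂]⟩
      have hni := hcond q i₁ i₂ hne _ _ sub1 sub2 hins1 hins2
      simp only [IsIndependent, not_forall, not_not] at hni
      obtain ⟨e, he, hsub⟩ := hni
      obtain ⟨v, hv⟩ := hC e he
      rw [Finset.mem_inter] at hv
      rcases Finset.mem_union.mp (hsub hv.1) with h | h
      · have hvmem : v ∈ e₁ ∩ C :=
          Finset.mem_inter.mpr ⟨Finset.mem_of_mem_erase h, hv.2⟩
        rw [hc₁, Finset.mem_singleton] at hvmem
        rw [hvmem] at h
        exact Finset.notMem_erase _ _ h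
      · have hvmem : v ∈ e₂ ∩ C :=
          Finset.mem_inter.mpr ⟨Finset.mem_of_mem_erase h, hv.2⟩
        rw [hc₂, Finset.mem_singleton] at hvmem
        rw [hvmem] at h
        exact Finset.notMem_erase _ _ h
    -- counting: each row contributes exactly one vertex of C
    have hfib : C.card = ∑ q : Fin n, (C.filter (fun v => v.1 = q)).card :=
      Finset.card_eq_sum_card_fiberwise (fun v _ => Finset.mem_univ v.1)
    have hone : ∀ q : Fin n, (C.filter (fun v => v.1 = q)).card = 1 := by
      intro q
      rw [Finset.card_eq_one]
      obtain ⟨w, hw⟩ := hC _ (hmatching q)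
      rw [Finset.mem_inter] at hw
      obtain ⟨i, -, hi⟩ := Finset.mem_image.mp hw.1
      subst hi
      refine ⟨(q, i), ?_⟩
      ext v
      simp only [Finset.mem_filter, Finset.mem_singleton]
      constructor
      · rintro ⟨hvC, hv1⟩
        have hveq : v = (q, v.2) := Prod.ext hv1 rfl
        have hvq : (q, v.2) ∈ C := hveq ▸ hvC
        have h2 := onerow q v.2 i hvq hw.2
        rw [hveq, h2]
      · rintro rfl
        exact ⟨hw.2, rfl⟩
    rw [hfib]
    simp [hone]
  intro C₁ C₂ h1 h2
  rw [key C₁ h1, key C₂ h2]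
end

section
/- Let H be a d-uniform hypergraph (d ≥ 2) on the vertex set {x_{ji} : 1 ≤ j ≤ n, 1 ≤ i ≤ d} (with these nd vertices distinct) such that {{x_{j1}, x_{j2}, …, x_{jd}} : 1 ≤ j ≤ n} is a perfect matching of H. Suppose that for every 1 ≤ q ≤ n, whenever 𝔢_1 and 𝔢_2 are submaximal edges of H with 𝔢_1 ∼ x_{q i_1} and 𝔢_2 ∼ x_{q i_2} for distinct indices i_1, i_2 in {1, …, d}, the set 𝔢_1 ∪ 𝔢_2 is not independent. Then every minimal vertex cover of H contains exactly one vertex of each matching hyperedge {x_{q1}, x_{q2}, …, x_{qd}}, and hence every minimal vertex cover of H has cardinality n. -/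
/-- let `H` be a `d`-uniform hypergraph (`d ≥ 2`) on the vertex set
`{x_{ji} = (j, i)}` such that the rows `{x_{j1}, …, x_{jd}}` form a perfect matching.
If for every `q`, whenever `𝔢₁ ∼ x_{q i₁}` and `𝔢₂ ∼ x_{q i₂}` for submaximal edges
`𝔢₁, 𝔢₂` and distinct `i₁, i₂`, the set `𝔢₁ ∪ 𝔢₂` is not independent, then every
minimal vertex cover of `H` contains exactly one vertex of each matching hyperedge,
and hence has cardinality `n`. -/
theorem minimalVertexCover_one_per_row {n d : ℕ} (hd : 2 ≤ d)
    (H : Finset (Finset (Fin n × Fin d)))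
    -- every vertex lies in some hyperedge (the union of the hyperedges is the vertex set)
    (hunion : ∀ v : Fin n × Fin d, ∃ e ∈ H, v ∈ e)
    -- `H` is `d`-uniform
    (huniform : ∀ e ∈ H, e.card = d)
    -- the rows `{(j, 1), …, (j, d)}` are hyperedges (they form a perfect matching)
    (hmatching : ∀ j : Fin n, Finset.univ.image (fun i : Fin d => (j, i)) ∈ H)
    (hcond : ∀ q : Fin n, ∀ i₁ i₂ : Fin d, i₁ ≠ i₂ →
      ∀ 𝔢₁ 𝔢₂ : Finset (Fin n × Fin d),
        IsSubmaximalEdge H d 𝔢₁ → IsSubmaximalEdge H d 𝔢₂ →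
        insert (q, i₁) 𝔢₁ ∈ H → insert (q, i₂) 𝔢₂ ∈ H →
        ¬ IsIndependent H (𝔢₁ ∪ 𝔢₂)) :
    ∀ C : Finset (Fin n × Fin d), IsMinimalVertexCover H C →
      (∀ q : Fin n, (C ∩ Finset.univ.image (fun i : Fin d => (q, i))).card = 1) ∧
      C.card = n := by

  intro C hC
  obtain ⟨hcov, hmin⟩ := hC
  -- For every v ∈ C there is a hyperedge meeting C exactly in v.
  have key : ∀ v ∈ C, ∃ e ∈ H, e ∩ C = {v} := by
    intro v hv
    have hsub : C.erase v ⊂ C := Finset.erase_ssubset hv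
    have hnc := hmin _ hsub
    simp only [IsVertexCover, not_forall] at hnc
    obtain ⟨e, he, hne⟩ := hnc
    rw [Finset.not_nonempty_iff_eq_empty] at hne
    refine ⟨e, he, ?_⟩
    have h1 : e ∩ C ⊆ {v} := by
      intro x hx
      rw [Finset.mem_inter] at hx
      rw [Finset.mem_singleton]
      by_contra hxv
      have : x ∈ e ∩ C.erase v := Finset.mem_inter.mpr ⟨hx.1, Finset.mem_erase.mpr ⟨hxv, hx.2⟩⟩
      rw [hne] at this
      exact absurd this (Finset.notMem_empty x)
    rcases Finset.subset_singleton_iff.mp h1 with h | h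
    · exact absurd h (Finset.nonempty_iff_ne_empty.mp (hcov e he))
    · exact h
  have hrow : ∀ (q : Fin n) (v : Fin n × Fin d),
      v ∈ Finset.univ.image (fun i : Fin d => (q, i)) ↔ v.1 = q := by
    intro q v
    simp only [Finset.mem_image, Finset.mem_univ, true_and]
    constructor
    · rintro ⟨i, rfl⟩; rfl
    · intro h; exact ⟨v.2, by rw [← h]⟩
  have hone : ∀ q : Fin n, (C ∩ Finset.univ.image (fun i : Fin d => (q, i))).card = 1 := by
    intro q
    have hne : (C ∩ Finset.univ.image (fun i : Fin d => (q, i))).Nonempty := by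
      have := hcov _ (hmatching q)
      rwa [Finset.inter_comm] at this
    rcases Nat.lt_or_ge (C ∩ Finset.univ.image (fun i : Fin d => (q, i))).card 2 with h | h
    · have := hne.card_pos
      omega
    · exfalso
      obtain ⟨a, ha, b, hb, hab⟩ := Finset.one_lt_card.mp h
      rw [Finset.mem_inter] at ha hb
      have haq : a.1 = q := (hrow q a).mp ha.2
      have hbq : b.1 = q := (hrow q b).mp hb.2
      have hi : a.2 ≠ b.2 := by
        intro h2; apply hab; exact Prod.ext (haq.trans hbq.symm) h2
      obtain ⟨e₁, he₁, hei₁⟩ := key a ha.1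
      obtain ⟨e₂, he₂, hei₂⟩ := key b hb.1
      have hae₁ : a ∈ e₁ := by
        have : a ∈ e₁ ∩ C := by rw [hei₁]; exact Finset.mem_singleton_self a
        exact (Finset.mem_inter.mp this).1
      have hbe₂ : b ∈ e₂ := by
        have : b ∈ e₂ ∩ C := by rw [hei₂]; exact Finset.mem_singleton_self b
        exact (Finset.mem_inter.mp this).1
      have hsm₁ : IsSubmaximalEdge H d (e₁.erase a) :=
        ⟨⟨e₁, he₁, Finset.erase_subset a e₁⟩, by
          rw [Finset.card_erase_of_mem hae₁, huniform e₁ he₁]⟩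
      have hsm₂ : IsSubmaximalEdge H d (e₂.erase b) :=
        ⟨⟨e₂, he₂, Finset.erase_subset b e₂⟩, by
          rw [Finset.card_erase_of_mem hbe₂, huniform e₂ he₂]⟩
      have hin₁ : insert (q, a.2) (e₁.erase a) ∈ H := by
        have : (q, a.2) = a := by rw [← haq]
        rw [this, Finset.insert_erase hae₁]; exact he₁
      have hin₂ : insert (q, b.2) (e₂.erase b) ∈ H := by
        have : (q, b.2) = b := by rw [← hbq]
        rw [this, Finset.insert_erase hbe₂]; exact he₂
      have hni := hcond q a.2 b.2 hi _ _ hsm₁ hsm₂ hin₁ hin₂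
      simp only [IsIndependent, not_forall, not_not] at hni
      obtain ⟨e, he, hesub⟩ := hni
      have hcap : e ∩ C = ∅ := by
        rw [Finset.eq_empty_iff_forall_notMem]
        intro x hx
        rw [Finset.mem_inter] at hx
        rcases Finset.mem_union.mp (hesub hx.1) with hx1 | hx2
        · have : x ∈ e₁ ∩ C := Finset.mem_inter.mpr ⟨Finset.mem_of_mem_erase hx1, hx.2⟩
          rw [hei₁, Finset.mem_singleton] at this
          exact (Finset.ne_of_mem_erase hx1) this
        · have : x ∈ e₂ ∩ C := Finset.mem_inter.mpr ⟨Finset.mem_of_mem_erase hx2, hx.2⟩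
          rw [hei₂, Finset.mem_singleton] at this
          exact (Finset.ne_of_mem_erase hx2) this
      exact Finset.nonempty_iff_ne_empty.mp (hcov e he) hcap
  refine ⟨hone, ?_⟩
  have hcard : C.card = ∑ q : Fin n, (C.filter (fun v => v.1 = q)).card :=
    Finset.card_eq_sum_card_fiberwise (fun v _ => Finset.mem_univ v.1)
  have hfib : ∀ q : Fin n,
      C.filter (fun v => v.1 = q) = C ∩ Finset.univ.image (fun i : Fin d => (q, i)) := by
    intro q
    ext v
    simp only [Finset.mem_filter, Finset.mem_inter, hrow q v]
  rw [hcard]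
  calc ∑ q : Fin n, (C.filter (fun v => v.1 = q)).card
      = ∑ q : Fin n, 1 := by
        apply Finset.sum_congr rfl
        intro q _
        rw [hfib q, hone q]
    _ = n := by simp
end

section
/- Let K be a field and let H be a d-uniform r-partite hypergraph with 2 ≤ d ≤ r that satisfies condition (**) for r, with parts V_i = {x_{1i}, …, x_{ni}} for 1 ≤ i ≤ r. Then H is unmixed if and only if for every 1 ≤ q ≤ n and every choice of indices 1 ≤ i_1 < i_2 < … < i_{r−d+2} ≤ r, the image of the polynomial x_{q i_1} + x_{q i_2} + … + x_{q i_{r−d+2}} in the edge ring K[H] = K[x_{ji} : 1 ≤ j ≤ n, 1 ≤ i ≤ r] / I(H) is not a zero divisor. -/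
set_option linter.unusedSectionVars false
set_option linter.unusedVariables false
set_option maxHeartbeats 1000000


/-- The edge ideal of a hypergraph `H` over a field (or commutative ring) `K`:
the ideal of the polynomial ring generated by the monomials `∏_{v ∈ e} x_v`
for hyperedges `e` of `H`. -/
noncomputable def edgeIdeal (K : Type*) [CommRing K] {V : Type*} (H : Finset (Finset V)) :
    Ideal (MvPolynomial V K) :=
  Ideal.span ((fun e : Finset V => ∏ v ∈ e, MvPolynomial.X v) '' (H : Set (Finset V)))

open MvPolynomial Finsupp


section AlgebraAux

variable {V : Type*} [Fintype V] [DecidableEq V] {K : Type*} [Field K]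

lemma aux_ind_apply (e : Finset V) (v : V) :
    (∑ w ∈ e, Finsupp.single w 1 : V →₀ ℕ) v = if v ∈ e then 1 else 0 := by
  rw [Finset.sum_apply']
  simp [Finsupp.single_apply, Finset.sum_ite_eq e v (fun _ => 1)]

lemma aux_prod_X_eq (e : Finset V) :
    (∏ v ∈ e, X v : MvPolynomial V K) = monomial (∑ v ∈ e, Finsupp.single v 1) 1 := by
  classical
  induction e using Finset.induction with
  | empty => simp [monomial_zero']
  | insert _ _ h ih =>
    rw [Finset.prod_insert h, Finset.sum_insert h, ih, X, monomial_mul, one_mul]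

lemma mem_edgeIdeal_iff (H : Finset (Finset V)) (f : MvPolynomial V K) :
    f ∈ edgeIdeal K H ↔ ∀ m ∈ f.support, ∃ e ∈ H, ∀ v ∈ e, m v ≠ 0 := by
  have himg : ((fun e : Finset V => ∏ v ∈ e, MvPolynomial.X v) '' (H : Set (Finset V)))
      = ((fun s => monomial s (1:K)) '' ((fun e : Finset V => ∑ v ∈ e, Finsupp.single v 1) ''
        (H : Set (Finset V)))) := by
    rw [Set.image_image]
    exact Set.image_congr fun e _ => aux_prod_X_eq e
  rw [edgeIdeal, himg, mem_ideal_span_monomial_image]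
  apply forall₂_congr
  intro m hm
  constructor
  · rintro ⟨si, ⟨e, he, rfl⟩, hle⟩
    refine ⟨e, he, fun v hv => ?_⟩
    have := (Finsupp.le_def.mp hle) v
    rw [aux_ind_apply, if_pos hv] at this
    omega
  · rintro ⟨e, he, hev⟩
    refine ⟨_, ⟨e, he, rfl⟩, Finsupp.le_def.mpr fun v => ?_⟩
    rw [aux_ind_apply]
    by_cases hv : v ∈ e
    · simpa [hv] using Nat.one_le_iff_ne_zero.mpr (hev v hv)
    · simp [hv]

lemma mem_spanX_iff (C : Finset V) (f : MvPolynomial V K) :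
    f ∈ Ideal.span (MvPolynomial.X '' (C : Set V) : Set (MvPolynomial V K)) ↔
      ∀ m ∈ f.support, ∃ v ∈ C, m v ≠ 0 := by
  rw [mem_ideal_span_X_image]; simp

noncomputable def phiC (C : Finset V) : MvPolynomial V K →ₐ[K] MvPolynomial V K :=
  aeval (fun v => if v ∈ C then 0 else X v)

lemma phiC_monomial (C : Finset V) (m : V →₀ ℕ) (c : K) :
    phiC C (monomial m c) =
      if ∀ v ∈ m.support, v ∉ C then monomial m c else 0 := by
  rw [phiC, aeval_monomial]
  by_cases h : ∀ v ∈ m.support, v ∉ C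
  · rw [if_pos h]
    have : (m.prod fun v k => (if v ∈ C then 0 else X v : MvPolynomial V K) ^ k)
        = m.prod fun v k => (X v : MvPolynomial V K) ^ k := by
      apply Finsupp.prod_congr
      intro v hv
      rw [if_neg (h v hv)]
    rw [this, Finsupp.prod, prod_X_pow_eq_monomial, algebraMap_eq, C_mul_monomial, mul_one]
  · rw [if_neg h]
    push_neg at h
    obtain ⟨v, hv, hvC⟩ := h
    rw [Finsupp.prod]
    rw [Finset.prod_eq_zero hv]
    · ring
    · rw [if_pos hvC, zero_pow]
      exact Finsupp.mem_support_iff.mp hv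

lemma coeff_phiC (C : Finset V) (f : MvPolynomial V K) (m : V →₀ ℕ)
    (hm : ∀ v ∈ m.support, v ∉ C) : coeff m (phiC C f) = coeff m f := by
  conv_lhs => rw [f.as_sum]
  rw [map_sum]
  rw [Finset.sum_congr rfl (fun m' _ => phiC_monomial C m' (coeff m' f))]
  conv_rhs => rw [f.as_sum]
  rw [coeff_sum, coeff_sum]
  apply Finset.sum_congr rfl
  intro m' hm'
  by_cases h : ∀ v ∈ m'.support, v ∉ C
  · rw [if_pos h]
  · rw [if_neg h, coeff_zero, coeff_monomial, if_neg, eq_comm]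
    intro hcon
    subst hcon
    exact h hm

lemma spanX_eq_ker (C : Finset V) (f : MvPolynomial V K) :
    f ∈ Ideal.span (MvPolynomial.X '' (C : Set V) : Set (MvPolynomial V K)) ↔
      phiC C f = 0 := by
  rw [mem_ideal_span_X_image]
  constructor
  · intro h
    rw [MvPolynomial.eq_zero_iff]
    intro m
    by_cases hm : ∀ v ∈ m.support, v ∉ C
    · rw [coeff_phiC C f m hm]
      by_contra hc
      obtain ⟨v, hvC, hv⟩ := h m (MvPolynomial.mem_support_iff.mpr hc)
      exact hm v (Finsupp.mem_support_iff.mpr hv) hvC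
    · conv_lhs => rw [f.as_sum]
      rw [map_sum, Finset.sum_congr rfl (fun m' _ => phiC_monomial C m' (coeff m' f)),
        coeff_sum]
      apply Finset.sum_eq_zero
      intro m' _
      by_cases h' : ∀ v ∈ m'.support, v ∉ C
      · rw [if_pos h', coeff_monomial, if_neg]
        intro hcon; subst hcon; exact hm h'
      · rw [if_neg h', coeff_zero]
  · intro h m hm
    by_contra hc
    push_neg at hc
    have : ∀ v ∈ m.support, v ∉ C := by
      intro v hv hvC
      exact Finsupp.mem_support_iff.mp hv (hc v hvC)
    have := coeff_phiC C f m this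
    rw [h, coeff_zero] at this
    exact MvPolynomial.mem_support_iff.mp hm this.symm

lemma spanX_isPrime (C : Finset V) :
    (Ideal.span (MvPolynomial.X '' (C : Set V) : Set (MvPolynomial V K))).IsPrime := by
  rw [Ideal.isPrime_iff]
  constructor
  · intro h
    have : (1 : MvPolynomial V K) ∈ _ := h ▸ Submodule.mem_top
    rw [spanX_eq_ker] at this
    simp at this
  · intro f g hfg
    rw [spanX_eq_ker] at hfg ⊢
    rw [spanX_eq_ker]
    rw [map_mul] at hfg
    exact mul_eq_zero.mp hfg

lemma edgeIdeal_le_spanX (H : Finset (Finset V)) (C : Finset V) (hC : IsVertexCover H C) :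
    edgeIdeal K H ≤ Ideal.span (MvPolynomial.X '' (C : Set V) : Set (MvPolynomial V K)) := by
  rw [edgeIdeal, Ideal.span_le]
  rintro _ ⟨e, he, rfl⟩
  obtain ⟨v, hv⟩ := hC e he
  rw [Finset.mem_inter] at hv
  show (∏ v ∈ e, X v : MvPolynomial V K) ∈ _
  rw [← Finset.prod_erase_mul e _ hv.1]
  exact Ideal.mul_mem_left _ _ (Ideal.subset_span ⟨v, hv.2, rfl⟩)

lemma exists_minimalVertexCover_subset (H : Finset (Finset V)) :
    ∀ (C : Finset V), IsVertexCover H C → ∃ C' ⊆ C, IsMinimalVertexCover H C' := by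
  classical
  intro C
  induction C using Finset.strongInductionOn with
  | _ C ih =>
    intro hC
    by_cases h : ∀ C' ⊂ C, ¬ IsVertexCover H C'
    · exact ⟨C, subset_rfl, hC, h⟩
    · push_neg at h
      obtain ⟨C', hC'sub, hC'⟩ := h
      obtain ⟨C'', h1, h2⟩ := ih C' hC'sub hC'
      exact ⟨C'', h1.trans hC'sub.subset, h2⟩

/-- If `b` is in the variable-prime of every minimal vertex cover, then `b ∈ I(H)`. -/
lemma mem_edgeIdeal_of_forall_minimal (H : Finset (Finset V)) (b : MvPolynomial V K)
    (hb : ∀ C, IsMinimalVertexCover H C →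
      b ∈ Ideal.span (MvPolynomial.X '' (C : Set V) : Set (MvPolynomial V K))) :
    b ∈ edgeIdeal K H := by
  rw [mem_edgeIdeal_iff]
  intro m hm
  by_contra hno
  push_neg at hno
  have hcov : IsVertexCover H (Finset.univ \ m.support) := by
    intro e he
    obtain ⟨v, hv, hmv⟩ := hno e he
    refine ⟨v, Finset.mem_inter.mpr ⟨hv, Finset.mem_sdiff.mpr ⟨Finset.mem_univ v, ?_⟩⟩⟩
    simp [Finsupp.mem_support_iff, hmv]
  obtain ⟨C', hsub, hmin⟩ := exists_minimalVertexCover_subset H _ hcov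
  obtain ⟨v, hvC, hmv⟩ := (mem_spanX_iff C' b).mp (hb C' hmin) m hm
  have := hsub hvC
  rw [Finset.mem_sdiff] at this
  exact this.2 (Finsupp.mem_support_iff.mpr hmv)

/-- From a minimal vertex cover, construct `b ∉ I` with `x_v · b ∈ I` for each `v ∈ C`. -/
lemma exists_annihilator (H : Finset (Finset V)) (C : Finset V)
    (hC : IsMinimalVertexCover H C) :
    ∃ b : MvPolynomial V K, b ∉ edgeIdeal K H ∧
      ∀ v ∈ C, MvPolynomial.X v * b ∈ edgeIdeal K H := by
  classical
  refine ⟨∏ w ∈ Finset.univ \ C, X w, ?_, ?_⟩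
  · rw [aux_prod_X_eq, mem_edgeIdeal_iff]
    intro hcon
    have hm := hcon (∑ v ∈ Finset.univ \ C, Finsupp.single v 1)
    rw [support_monomial, if_neg one_ne_zero, Finset.mem_singleton] at hm
    obtain ⟨e, he, hev⟩ := hm rfl
    obtain ⟨v, hv⟩ := hC.1 e he
    rw [Finset.mem_inter] at hv
    have := hev v hv.1
    rw [aux_ind_apply, if_neg] at this
    · exact this rfl
    · rw [Finset.mem_sdiff]
      exact fun h => h.2 hv.2
  · intro v hv
    have hnc : ¬ IsVertexCover H (C.erase v) := hC.2 _ (Finset.erase_ssubset hv)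
    rw [IsVertexCover] at hnc
    push_neg at hnc
    obtain ⟨e, he, hee⟩ := hnc
    have hee : e ∩ C.erase v = ∅ := hee
    have hsub : e ⊆ insert v (Finset.univ \ C) := by
      intro w hw
      rcases eq_or_ne w v with rfl | hne
      · exact Finset.mem_insert_self _ _
      · refine Finset.mem_insert_of_mem (Finset.mem_sdiff.mpr ⟨Finset.mem_univ w, fun hwC => ?_⟩)
        have : w ∈ e ∩ C.erase v := Finset.mem_inter.mpr ⟨hw, Finset.mem_erase.mpr ⟨hne, hwC⟩⟩
        simp [hee] at this
    have hvnot : v ∉ Finset.univ \ C := by simp [hv]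
    have : MvPolynomial.X v * (∏ w ∈ Finset.univ \ C, X w : MvPolynomial V K)
        = ∏ w ∈ insert v (Finset.univ \ C), X w := (Finset.prod_insert hvnot).symm
    rw [this, ← Finset.prod_sdiff hsub]
    exact Ideal.mul_mem_left _ _ (Ideal.subset_span ⟨e, he, rfl⟩)

lemma sum_X_mem_spanX_iff {k : ℕ} (g : Fin k → V) (hg : Function.Injective g) (C : Finset V) :
    (∑ t : Fin k, X (g t) : MvPolynomial V K) ∈
        Ideal.span (MvPolynomial.X '' (C : Set V) : Set (MvPolynomial V K)) ↔
      ∀ t, g t ∈ C := by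
  constructor
  · intro h t0
    rw [mem_spanX_iff] at h
    have hc : coeff (Finsupp.single (g t0) 1) (∑ t : Fin k, X (g t) : MvPolynomial V K) = 1 := by
      rw [coeff_sum]
      rw [Finset.sum_congr rfl (fun t _ => coeff_X' (R := K) (g t) (Finsupp.single (g t0) 1))]
      rw [Finset.sum_congr rfl (fun t _ => ?_), Finset.sum_ite_eq' Finset.univ t0 (fun _ => 1),
        if_pos (Finset.mem_univ t0)]
      by_cases ht : t = t0
      · subst ht; simp
      · rw [if_neg, if_neg ht]
        intro hcon
        exact ht (hg (Finsupp.single_left_injective one_ne_zero hcon))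
    obtain ⟨v, hvC, hv⟩ := h _ (MvPolynomial.mem_support_iff.mpr (by rw [hc]; exact one_ne_zero))
    have : v = g t0 := by
      by_contra hne
      exact hv (Finsupp.single_eq_of_ne' (Ne.symm hne))
    rwa [this] at hvC
  · intro h
    exact Ideal.sum_mem _ fun t _ => Ideal.subset_span ⟨g t, h t, rfl⟩

end AlgebraAux

section Comb
variable {n r d : ℕ} (hd : 2 ≤ d) (hdr : d ≤ r)
  (H : Finset (Finset (Fin n × Fin r)))
  (huniform : ∀ e ∈ H, e.card = d)
  (hpartite : ∀ e ∈ H, ∀ p ∈ e, ∀ p' ∈ e, p.2 = p'.2 → p = p')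
  (hclique : ∀ j : Fin n, ∀ s ⊆ Finset.univ.image (fun i : Fin r => (j, i)),
      s.card = d → s ∈ H)

/-- number of elements of `C` in row `j` -/
def rowCard {n r : ℕ} (C : Finset (Fin n × Fin r)) (j : Fin n) : ℕ :=
  (C.filter (fun p => p.1 = j)).card

lemma card_eq_sum_rowCard (C : Finset (Fin n × Fin r)) :
    C.card = ∑ j : Fin n, rowCard C j :=
  Finset.card_eq_sum_card_fiberwise (fun p _ => Finset.mem_univ p.1)

lemma fin_filter_lt_card {k : ℕ} (hk : k ≤ r) :
    (Finset.univ.filter fun i : Fin r => (i : ℕ) < k).card = k := by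
  induction k with
  | zero => simp
  | succ k ih =>
    have hk' : k ≤ r := Nat.le_of_succ_le hk
    have : (Finset.univ.filter fun i : Fin r => (i : ℕ) < k + 1)
        = insert (⟨k, hk⟩ : Fin r) (Finset.univ.filter fun i : Fin r => (i : ℕ) < k) := by
      ext i
      simp only [Finset.mem_filter, Finset.mem_univ, true_and, Finset.mem_insert, Fin.ext_iff]
      omega
    rw [this, Finset.card_insert_of_notMem (by simp), ih hk']

include hdr hclique huniform in
/-- every vertex cover contains at least `r - d + 1` vertices from each row -/
lemma rowCard_lower (C : Finset (Fin n × Fin r)) (hC : IsVertexCover H C) (j : Fin n) :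
    r - d + 1 ≤ rowCard C j := by
  classical
  by_contra hlt
  push_neg at hlt
  set Row := Finset.univ.image (fun i : Fin r => (j, i)) with hRow
  have hrowcard : Row.card = r := by
    rw [hRow, Finset.card_image_of_injective _ (fun a b hab => (Prod.mk.injEq _ _ _ _).mp hab |>.2),
      Finset.card_univ, Fintype.card_fin]
  have hint : Row ∩ C = C.filter (fun p => p.1 = j) := by
    ext p
    simp only [hRow, Finset.mem_inter, Finset.mem_image, Finset.mem_univ, true_and,
      Finset.mem_filter]
    constructor
    · rintro ⟨⟨i, rfl⟩, h2⟩; exact ⟨h2, rfl⟩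
    · rintro ⟨h1, h2⟩; exact ⟨⟨p.2, by rw [← h2]⟩, h1⟩
  have hsd : d ≤ (Row \ C).card := by
    have := Finset.card_sdiff_add_card_inter Row C
    rw [hint] at this
    unfold rowCard at hlt
    omega
  obtain ⟨s, hs_sub, hs_card⟩ := Finset.exists_subset_card_eq hsd
  have hsH : s ∈ H := hclique j s (hs_sub.trans (Finset.sdiff_subset)) hs_card
  obtain ⟨v, hv⟩ := hC s hsH
  rw [Finset.mem_inter] at hv
  have := hs_sub hv.1
  rw [Finset.mem_sdiff] at this
  exact this.2 hv.2

/-- the canonical minimal vertex cover: first `r - d + 1` columns -/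
def C0 (n r d : ℕ) : Finset (Fin n × Fin r) :=
  Finset.univ.filter (fun p => (p.2 : ℕ) < r - d + 1)

include hd hdr huniform hpartite in
lemma C0_cover : IsVertexCover H (C0 n r d) := by
  intro e he
  by_contra hem
  rw [Finset.not_nonempty_iff_eq_empty] at hem
  have hsub : e.image Prod.snd ⊆ Finset.univ.filter (fun i : Fin r => ¬ (i : ℕ) < r - d + 1) := by
    intro i hi
    rw [Finset.mem_image] at hi
    obtain ⟨p, hp, rfl⟩ := hi
    simp only [Finset.mem_filter, Finset.mem_univ, true_and]
    intro hlt
    have : p ∈ e ∩ C0 n r d := Finset.mem_inter.mpr ⟨hp, by simp [C0]; omega⟩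
    simp [hem] at this
  have hinj : (e.image Prod.snd).card = d := by
    rw [Finset.card_image_of_injOn, huniform e he]
    intro p hp p' hp' hpp
    exact hpartite e he p hp p' hp' hpp
  have hcompl : (Finset.univ.filter (fun i : Fin r => ¬ (i : ℕ) < r - d + 1)).card = d - 1 := by
    have := fin_filter_lt_card (r := r) (k := r - d + 1) (by omega)
    have h2 := Finset.card_filter_add_card_filter_not
      (s := (Finset.univ : Finset (Fin r))) (p := fun i : Fin r => (i : ℕ) < r - d + 1)
    rw [Finset.card_univ, Fintype.card_fin] at h2
    omega
  have := Finset.card_le_card hsub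
  omega

include hd hdr huniform hpartite hclique in
lemma C0_minimal : IsMinimalVertexCover H (C0 n r d) := by
  refine ⟨C0_cover hd hdr H huniform hpartite, ?_⟩
  intro C' hC' hcov
  obtain ⟨p, hpC0, hpC'⟩ := Finset.exists_of_ssubset hC'
  obtain ⟨j, i⟩ := p
  have hi : (i : ℕ) < r - d + 1 := by simpa [C0] using hpC0
  set e : Finset (Fin n × Fin r) :=
    insert (j, i) ((Finset.univ.filter (fun i' : Fin r => ¬ (i' : ℕ) < r - d + 1)).image
      (fun i' => (j, i'))) with he_def
  have hnotmem : (j, i) ∉ (Finset.univ.filter (fun i' : Fin r => ¬ (i' : ℕ) < r - d + 1)).image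
      (fun i' => (j, i')) := by
    simp only [Finset.mem_image, Finset.mem_filter, Finset.mem_univ, true_and, Prod.mk.injEq]
    rintro ⟨i', hi', _, rfl⟩
    exact hi' hi
  have hcompl : (Finset.univ.filter (fun i' : Fin r => ¬ (i' : ℕ) < r - d + 1)).card = d - 1 := by
    have := fin_filter_lt_card (r := r) (k := r - d + 1) (by omega)
    have h2 := Finset.card_filter_add_card_filter_not
      (s := (Finset.univ : Finset (Fin r))) (p := fun i' : Fin r => (i' : ℕ) < r - d + 1)
    rw [Finset.card_univ, Fintype.card_fin] at h2
    omega
  have hecard : e.card = d := by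
    rw [he_def, Finset.card_insert_of_notMem hnotmem,
      Finset.card_image_of_injective _ (fun a b hab => (Prod.mk.injEq _ _ _ _).mp hab |>.2),
      hcompl]
    omega
  have heH : e ∈ H := by
    apply hclique j e _ hecard
    rw [he_def]
    intro p hp
    rw [Finset.mem_insert] at hp
    rcases hp with rfl | hp
    · exact Finset.mem_image.mpr ⟨i, Finset.mem_univ i, rfl⟩
    · rw [Finset.mem_image] at hp ⊢
      obtain ⟨i', _, rfl⟩ := hp
      exact ⟨i', Finset.mem_univ i', rfl⟩
  obtain ⟨v, hv⟩ := hcov e heH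
  rw [Finset.mem_inter, he_def, Finset.mem_insert] at hv
  rcases hv.1 with rfl | hmem
  · exact hpC' hv.2
  · have hvC0 : v ∈ C0 n r d := hC'.subset hv.2
    rw [Finset.mem_image] at hmem
    obtain ⟨i', hi', rfl⟩ := hmem
    rw [Finset.mem_filter] at hi'
    simp [C0] at hvC0
    exact hi'.2 (by omega)

include hd hdr huniform hpartite hclique in
/-- the combinatorial characterization of unmixedness -/
lemma unmixed_iff_comb :
    IsUnmixed H ↔ ∀ C, IsMinimalVertexCover H C → ∀ q : Fin n, rowCard C q ≤ r - d + 1 := by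
  constructor
  · intro hu C hC q
    by_contra hgt
    push_neg at hgt
    have h1 := hu C (C0 n r d) hC (C0_minimal hd hdr H huniform hpartite hclique)
    have hC0card : ∀ j : Fin n, rowCard (C0 n r d) j = r - d + 1 := by
      intro j
      unfold rowCard
      have : (C0 n r d).filter (fun p => p.1 = j)
          = (Finset.univ.filter fun i : Fin r => (i : ℕ) < r - d + 1).image (fun i => (j, i)) := by
        ext ⟨j', i'⟩
        simp only [C0, Finset.mem_filter, Finset.filter_filter, Finset.mem_image,
          Finset.mem_univ, true_and, Prod.mk.injEq]
        constructor
        · rintro ⟨h1, rfl⟩; exact ⟨i', h1, rfl, rfl⟩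
        · rintro ⟨i, hi, rfl, rfl⟩; exact ⟨hi, rfl⟩
      rw [this, Finset.card_image_of_injective _
        (fun a b hab => (Prod.mk.injEq _ _ _ _).mp hab |>.2), fin_filter_lt_card (by omega)]
    have hlow := fun j => rowCard_lower hdr H huniform hclique C hC.1 j
    have hcardC := card_eq_sum_rowCard C
    have hcardC0 := card_eq_sum_rowCard (C0 n r d)
    rw [Finset.sum_congr rfl (fun j _ => hC0card j), Finset.sum_const, Finset.card_univ,
      Fintype.card_fin, smul_eq_mul] at hcardC0
    have hsum_lb : (∑ j : Fin n, rowCard C j) > n * (r - d + 1) := by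
      calc (∑ j : Fin n, rowCard C j)
          ≥ ∑ j : Fin n, ((r - d + 1) + if j = q then 1 else 0) := by
            apply Finset.sum_le_sum
            intro j _
            rcases eq_or_ne j q with rfl | hne
            · simpa using hgt
            · simpa [hne] using hlow j
        _ = n * (r - d + 1) + 1 := by
            rw [Finset.sum_add_distrib, Finset.sum_const, Finset.sum_ite_eq' _ q (fun _ => 1)]
            simp [mul_comm]
        _ > n * (r - d + 1) := by omega
    omega
  · intro hb C₁ C₂ h₁ h₂
    have key : ∀ C, IsMinimalVertexCover H C → C.card = n * (r - d + 1) := by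
      intro C hC
      rw [card_eq_sum_rowCard]
      rw [Finset.sum_congr rfl (fun j _ => le_antisymm (hb C hC j)
        (rowCard_lower hdr H huniform hclique C hC.1 j))]
      simp [Finset.sum_const, mul_comm]
    rw [key C₁ h₁, key C₂ h₂]

end Comb

/-- a `d`-uniform `r`-partite hypergraph (`2 ≤ d ≤ r`) satisfying
condition (**) for `r` (vertices `x_{ji} = (j, i)`, parts `V_i`, each row a clique)
is unmixed iff for every `q` and all indices `i_1 < i_2 < … < i_{r-d+2}`, the image
of `x_{q i_1} + … + x_{q i_{r-d+2}}` in the edge ring `K[H]` is not a zero divisor. -/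
theorem unmixed_iff_not_zeroDivisor {n r d : ℕ} (hd : 2 ≤ d) (hdr : d ≤ r)
    (K : Type*) [Field K]
    (H : Finset (Finset (Fin n × Fin r)))
    -- every vertex lies in some hyperedge (the union of the hyperedges is the vertex set)
    (hunion : ∀ v : Fin n × Fin r, ∃ e ∈ H, v ∈ e)
    -- `H` is `d`-uniform
    (huniform : ∀ e ∈ H, e.card = d)
    -- `H` is `r`-partite with parts `V_i = {(j, i) : j}`: no hyperedge contains two
    -- distinct vertices from the same part
    (hpartite : ∀ e ∈ H, ∀ p ∈ e, ∀ p' ∈ e, p.2 = p'.2 → p = p')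
    -- condition (**): each row `{(j, 1), …, (j, r)}` is a clique
    (hclique : ∀ j : Fin n, ∀ s ⊆ Finset.univ.image (fun i : Fin r => (j, i)),
      s.card = d → s ∈ H) :
    IsUnmixed H ↔
      ∀ q : Fin n, ∀ ι : Fin (r - d + 2) → Fin r, StrictMono ι →
        ¬ ∃ b : MvPolynomial (Fin n × Fin r) K ⧸ edgeIdeal K H,
            b ≠ 0 ∧
            Ideal.Quotient.mk (edgeIdeal K H)
              (∑ t : Fin (r - d + 2), MvPolynomial.X (q, ι t)) * b = 0 := by
  classical
  -- step 1: the zero-divisor condition ↔ a minimal cover containing the given row vertices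
  have step1 : ∀ (q : Fin n) (ι : Fin (r - d + 2) → Fin r), StrictMono ι →
      ((∃ b : MvPolynomial (Fin n × Fin r) K ⧸ edgeIdeal K H,
          b ≠ 0 ∧
          Ideal.Quotient.mk (edgeIdeal K H)
            (∑ t : Fin (r - d + 2), MvPolynomial.X (q, ι t)) * b = 0) ↔
        (∃ C, IsMinimalVertexCover H C ∧ ∀ t, (q, ι t) ∈ C)) := by
    intro q ι hι
    have hginj : Function.Injective (fun t : Fin (r - d + 2) => ((q, ι t) : Fin n × Fin r)) :=
      fun a b hab => hι.injective (congrArg Prod.snd hab)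
    constructor
    · rintro ⟨b, hb0, hbmul⟩
      obtain ⟨f, rfl⟩ := Ideal.Quotient.mk_surjective b
      rw [← map_mul, Ideal.Quotient.eq_zero_iff_mem] at hbmul
      rw [ne_eq, Ideal.Quotient.eq_zero_iff_mem] at hb0
      by_contra hno
      push_neg at hno
      apply hb0
      apply mem_edgeIdeal_of_forall_minimal
      intro C hC
      have hSC : (∑ t : Fin (r - d + 2), MvPolynomial.X ((q, ι t) : Fin n × Fin r)
          : MvPolynomial (Fin n × Fin r) K) ∉
          Ideal.span (MvPolynomial.X '' (C : Set (Fin n × Fin r))) := by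
        rw [sum_X_mem_spanX_iff _ hginj]
        intro hall
        exact (hno C hC).elim (fun t ht => ht (hall t))
      have hprime := spanX_isPrime (K := K) C
      have hmem := edgeIdeal_le_spanX H C hC.1 hbmul
      rcases hprime.mem_or_mem hmem with h | h
      · exact absurd h hSC
      · exact h
    · rintro ⟨C, hC, hall⟩
      obtain ⟨b0, hb0, hann⟩ := exists_annihilator (K := K) H C hC
      refine ⟨Ideal.Quotient.mk _ b0, ?_, ?_⟩
      · rw [ne_eq, Ideal.Quotient.eq_zero_iff_mem]
        exact hb0
      · rw [← map_mul, Ideal.Quotient.eq_zero_iff_mem, Finset.sum_mul]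
        exact Ideal.sum_mem _ fun t _ => hann _ (hall t)
  -- step 2: row-count bridge
  have step2 : ∀ (C : Finset (Fin n × Fin r)) (q : Fin n),
      (∃ ι : Fin (r - d + 2) → Fin r, StrictMono ι ∧ ∀ t, (q, ι t) ∈ C) ↔
        r - d + 2 ≤ rowCard C q := by
    intro C q
    constructor
    · rintro ⟨ι, hι, hall⟩
      have hsub : Finset.univ.image (fun t => ((q, ι t) : Fin n × Fin r))
          ⊆ C.filter (fun p => p.1 = q) := by
        intro p hp
        rw [Finset.mem_image] at hp
        obtain ⟨t, _, rfl⟩ := hp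
        exact Finset.mem_filter.mpr ⟨hall t, rfl⟩
      have := Finset.card_le_card hsub
      rw [Finset.card_image_of_injective _
        (fun a b hab => hι.injective (congrArg Prod.snd hab)), Finset.card_univ,
        Fintype.card_fin] at this
      exact this
    · intro hcard
      have hBcard : r - d + 2 ≤ (Finset.univ.filter fun i : Fin r => (q, i) ∈ C).card := by
        have heq : C.filter (fun p => p.1 = q)
            = (Finset.univ.filter fun i : Fin r => (q, i) ∈ C).image (fun i => (q, i)) := by
          ext ⟨j, i⟩
          simp only [Finset.mem_filter, Finset.mem_image, Finset.mem_univ, true_and,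
            Prod.mk.injEq]
          constructor
          · rintro ⟨h1, rfl⟩; exact ⟨i, h1, rfl, rfl⟩
          · rintro ⟨i', hi', rfl, rfl⟩; exact ⟨hi', rfl⟩
        rw [rowCard, heq, Finset.card_image_of_injective _
          (fun a b hab => (Prod.mk.injEq _ _ _ _).mp hab |>.2)] at hcard
        exact hcard
      obtain ⟨B', hB'sub, hB'card⟩ := Finset.exists_subset_card_eq hBcard
      refine ⟨B'.orderEmbOfFin hB'card, (B'.orderEmbOfFin hB'card).strictMono, fun t => ?_⟩
      have := hB'sub (B'.orderEmbOfFin_mem hB'card t)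
      simpa using this
  rw [unmixed_iff_comb hd hdr H huniform hpartite hclique]
  constructor
  · intro hcomb q ι hι hex
    obtain ⟨C, hC, hall⟩ := (step1 q ι hι).mp hex
    have := (step2 C q).mp ⟨ι, hι, hall⟩
    have := hcomb C hC q
    omega
  · intro hrhs C hC q
    by_contra hgt
    push_neg at hgt
    obtain ⟨ι, hι, hall⟩ := (step2 C q).mpr (by omega)
    exact hrhs q ι hι ((step1 q ι hι).mpr ⟨C, hC, hall⟩)
end
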